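/- arXiv:math/0502266 — 2 statements merged into one kernel-verified Lean document; each statement's English description precedes it below -/
import Mathlib

section
/- Let Γ be a finite connected graph with a length function λ: Γ₁ → [0, 1/2] satisfying λ(ē) = λ(e) and λ(e) = 1/2 for at least one half-edge in each cycle. Then the map λ_*: Ω¹(Γ, V) → Hom(H₁(Γ), V) defined by λ_*(ω)(Σ nᵢ eᵢ) = 2 Σ nᵢ λ(eᵢ) ω(eᵢ) is an isomorphism. -/
open Finset

/-- A finite graph: vertices, half-edges with a free involution, and a target map. -/
structure FinGraph where
  V : Type
  H : Type
  [fV : Fintype V]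
  [fH : Fintype H]
  [dV : DecidableEq V]
  [dH : DecidableEq H]
  bar : H → H
  bar_invol : ∀ e, bar (bar e) = e
  bar_ne : ∀ e, bar e ≠ e
  tar : H → V

attribute [instance] FinGraph.fV FinGraph.fH FinGraph.dV FinGraph.dH

namespace FinGraph

variable (G : FinGraph)

/-- The source of a half-edge is the target of its other half. -/
def src (e : G.H) : G.V := G.tar (G.bar e)

/-- One step along a half-edge belonging to the allowed set `A`. -/
def Step (A : Set G.H) (v w : G.V) : Prop := ∃ e, e ∈ A ∧ G.src e = v ∧ G.tar e = w

/-- Reachability using only half-edges in `A`. -/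
def ReachIn (A : Set G.H) (v w : G.V) : Prop := Relation.ReflTransGen (G.Step A) v w

/-- The graph is connected. -/
def Connected : Prop := ∀ v w : G.V, G.ReachIn Set.univ v w

/-- The valence of a vertex: the number of half-edges incident to it. -/
def valence (v : G.V) : ℕ := (univ.filter (fun e => G.tar e = v)).card

/-- An edge `{e, ē}` is separating if deleting it disconnects the graph. -/
def IsSeparating (e : G.H) : Prop :=
  ¬ ∀ v w : G.V, G.ReachIn {h | h ≠ e ∧ h ≠ G.bar e} v w

/-- The graph has first Betti number (rank) `n`; for a connected graph this
says `#edges = #vertices + n - 1`, i.e. `#H + 2 = 2(#V + n)`. -/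
def HasRank (n : ℕ) : Prop := Fintype.card G.H + 2 = 2 * (Fintype.card G.V + n)

end FinGraph

namespace FinGraph

variable (G : FinGraph)

/-- A balanced 1-cocycle with values in an additive group. -/
def IsBalanced {W : Type*} [AddCommGroup W] (ω : G.H → W) : Prop :=
  (∀ e, ω (G.bar e) = - ω e) ∧
  ∀ v : G.V, ∑ e ∈ univ.filter (fun e => G.tar e = v), ω e = 0

/-- The space `Ω¹(Γ, V)` of balanced `V`-valued 1-cocycles. -/
def Omega (W : Type*) [AddCommGroup W] [Module ℝ W] : Submodule ℝ (G.H → W) where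
  carrier := {ω | G.IsBalanced ω}
  zero_mem' := ⟨fun e => by simp, fun v => by simp⟩
  add_mem' := by
    intro a b ha hb
    refine ⟨fun e => ?_, fun v => ?_⟩
    · simp only [Pi.add_apply, ha.1 e, hb.1 e]; abel
    · simp only [Pi.add_apply, Finset.sum_add_distrib, ha.2 v, hb.2 v, add_zero]
  smul_mem' := by
    intro r a ha
    refine ⟨fun e => ?_, fun v => ?_⟩
    · simp only [Pi.smul_apply, ha.1 e, smul_neg]
    · simp only [Pi.smul_apply, ← Finset.smul_sum, ha.2 v, smul_zero]

/-- The group of 1-cycles (the model for `H₁(Γ)`): antisymmetric integer functions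
on half-edges with vanishing vertex sums. -/
def cycles : AddSubgroup (G.H → ℤ) where
  carrier := {c | G.IsBalanced c}
  zero_mem' := ⟨fun e => by simp, fun v => by simp⟩
  add_mem' := by
    intro a b ha hb
    refine ⟨fun e => ?_, fun v => ?_⟩
    · simp only [Pi.add_apply, ha.1 e, hb.1 e]; abel
    · simp only [Pi.add_apply, Finset.sum_add_distrib, ha.2 v, hb.2 v, add_zero]
  neg_mem' := by
    intro a ha
    refine ⟨fun e => ?_, fun v => ?_⟩
    · simp only [Pi.neg_apply, ha.1 e]
    · simp only [Pi.neg_apply, Finset.sum_neg_distrib, ha.2 v, neg_zero]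

/-- A spanning (maximal) tree, given as a `bar`-closed set of half-edges. -/
def IsSpanningTree (S : Finset G.H) : Prop :=
  (∀ e ∈ S, G.bar e ∈ S) ∧ (∀ v w : G.V, G.ReachIn ↑S v w) ∧
    S.card + 2 = 2 * Fintype.card G.V

/-- `es` is a choice of one half-edge from each of the `r` edges not in `S`. -/
def IsComplement (S : Finset G.H) {r : ℕ} (es : Fin r → G.H) : Prop :=
  (∀ i, es i ∉ S) ∧ ∀ e ∉ S, ∃! i, e = es i ∨ e = G.bar (es i)

/-- `ω` is nonsingular: its values span an `r`-dimensional subspace. -/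
def Nonsingular {W : Type*} [AddCommGroup W] [Module ℝ W] (ω : G.H → W) (r : ℕ) : Prop :=
  Module.finrank ℝ ↥(Submodule.span ℝ (Set.range ω)) = r

/-- A length function on the graph. -/
def IsLengthFunction (lam : G.H → ℝ) : Prop :=
  (∀ e, 0 ≤ lam e ∧ lam e ≤ 1/2) ∧ (∀ e, lam (G.bar e) = lam e) ∧
    ∀ c ∈ G.cycles, c ≠ 0 → ∃ e, c e ≠ 0 ∧ lam e = 1/2

end FinGraph

namespace FinGraph

variable {G : FinGraph}

lemma bar_injective (G : FinGraph) : Function.Injective G.bar :=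
  Function.LeftInverse.injective G.bar_invol

lemma mem_cycles_iff {c : G.H → ℤ} : c ∈ G.cycles ↔ G.IsBalanced c := Iff.rfl

lemma mem_Omega_iff {W : Type*} [AddCommGroup W] [Module ℝ W] {ω : G.H → W} :
    ω ∈ G.Omega W ↔ G.IsBalanced ω := Iff.rfl

/-- From a closed non-repeating walk, build an integer cycle. -/
lemma walk_cycle (L : ℕ) (hL : 0 < L) (w : ℕ → G.H)
    (hadj : ∀ i < L, G.src (w ((i + 1) % L)) = G.tar (w i))
    (hdis : ∀ i j, i < j → j < L → w j ≠ w i ∧ w j ≠ G.bar (w i)) :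
    ∃ c ∈ G.cycles, c (w 0) = 1 ∧ ∀ e, c e ≠ 0 → ∃ i < L, w i = e ∨ w i = G.bar e := by
  classical
  set c : G.H → ℤ := fun e =>
    ((((Finset.range L).filter (fun i => w i = e)).card : ℤ) -
      (((Finset.range L).filter (fun i => w i = G.bar e)).card : ℤ)) with hc
  have hrw : ∀ e, c e = ∑ i ∈ Finset.range L,
      ((if w i = e then (1 : ℤ) else 0) - (if w i = G.bar e then 1 else 0)) := by
    intro e
    simp only [hc, Finset.card_filter, Nat.cast_sum, Finset.sum_sub_distrib]
    simp
  refine ⟨c, ⟨fun e => ?_, fun v => ?_⟩, ?_, ?_⟩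
  · simp only [hc, G.bar_invol]; ring
  · -- vertex sums
    have hsum : ∀ v : G.V, ∑ e ∈ Finset.univ.filter (fun e => G.tar e = v), c e
        = ∑ i ∈ Finset.range L, ((if G.tar (w i) = v then (1:ℤ) else 0)
            - (if G.src (w i) = v then 1 else 0)) := by
      intro v
      rw [Finset.sum_congr rfl (fun e _ => hrw e), Finset.sum_comm]
      refine Finset.sum_congr rfl (fun i _ => ?_)
      rw [Finset.sum_sub_distrib]
      have h1 : ∑ e ∈ Finset.univ.filter (fun e => G.tar e = v),
          (if w i = e then (1:ℤ) else 0) = if G.tar (w i) = v then 1 else 0 := by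
        rw [Finset.sum_ite_eq]
        simp
      have h2 : ∑ e ∈ Finset.univ.filter (fun e => G.tar e = v),
          (if w i = G.bar e then (1:ℤ) else 0) = if G.src (w i) = v then 1 else 0 := by
        have : ∀ e, (w i = G.bar e) ↔ (G.bar (w i) = e) := by
          intro e
          constructor
          · intro h; rw [h, G.bar_invol]
          · intro h; rw [← h, G.bar_invol]
        rw [Finset.sum_congr rfl (fun e _ => by rw [if_congr (this e) rfl rfl]),
          Finset.sum_ite_eq]
        simp [FinGraph.src]
        exact if_congr Iff.rfl rfl rfl
      rw [h1, h2]
    rw [hsum v, Finset.sum_sub_distrib]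
    have hbij : ∑ i ∈ Finset.range L, (if G.src (w i) = v then (1:ℤ) else 0)
        = ∑ i ∈ Finset.range L, (if G.tar (w i) = v then (1:ℤ) else 0) := by
      refine Finset.sum_bij' (fun j _ => (j + (L - 1)) % L) (fun i _ => (i + 1) % L)
        ?_ ?_ ?_ ?_ ?_
      · intro j hj
        exact Finset.mem_range.mpr (Nat.mod_lt _ hL)
      · intro i hi
        exact Finset.mem_range.mpr (Nat.mod_lt _ hL)
      · intro j hj
        have hj' := Finset.mem_range.mp hj
        show ((j + (L - 1)) % L + 1) % L = j
        rw [Nat.mod_add_mod]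
        have h : j + (L - 1) + 1 = j + L := by omega
        rw [h, Nat.add_mod_right, Nat.mod_eq_of_lt hj']
      · intro i hi
        have hi' := Finset.mem_range.mp hi
        show ((i + 1) % L + (L - 1)) % L = i
        rw [Nat.mod_add_mod]
        have h : i + 1 + (L - 1) = i + L := by omega
        rw [h, Nat.add_mod_right, Nat.mod_eq_of_lt hi']
      · intro j hj
        have hj' := Finset.mem_range.mp hj
        have heq : ((j + (L - 1)) % L + 1) % L = j := by
          rw [Nat.mod_add_mod]
          have h : j + (L - 1) + 1 = j + L := by omega
          rw [h, Nat.add_mod_right, Nat.mod_eq_of_lt hj']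
        have := hadj ((j + (L - 1)) % L) (Nat.mod_lt _ hL)
        rw [heq] at this
        show (if G.src (w j) = v then (1:ℤ) else 0) = _
        rw [this]
    rw [hbij]
    ring
  · -- value 1 at w 0
    have h1 : (Finset.range L).filter (fun i => w i = w 0) = {0} := by
      ext i
      simp only [Finset.mem_filter, Finset.mem_range, Finset.mem_singleton]
      constructor
      · rintro ⟨hiL, hw⟩
        by_contra hne
        exact (hdis 0 i (Nat.pos_of_ne_zero hne) hiL).1 hw
      · rintro rfl
        exact ⟨hL, rfl⟩
    have h2 : (Finset.range L).filter (fun i => w i = G.bar (w 0)) = ∅ := by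
      ext i
      simp only [Finset.mem_filter, Finset.mem_range, Finset.notMem_empty, iff_false,
        not_and]
      intro hiL hw
      rcases Nat.eq_zero_or_pos i with rfl | hpos
      · exact G.bar_ne (w 0) hw.symm
      · exact (hdis 0 i hpos hiL).2 hw
    simp [hc, h1, h2]
  · -- support
    intro e hce
    by_contra hcon
    push_neg at hcon
    have h1 : (Finset.range L).filter (fun i => w i = e) = ∅ := by
      ext i
      simp only [Finset.mem_filter, Finset.mem_range, Finset.notMem_empty, iff_false, not_and]
      intro hiL hw
      exact (hcon i hiL).1 hw
    have h2 : (Finset.range L).filter (fun i => w i = G.bar e) = ∅ := by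
      ext i
      simp only [Finset.mem_filter, Finset.mem_range, Finset.notMem_empty, iff_false, not_and]
      intro hiL hw
      exact (hcon i hiL).2 hw
    exact hce (by simp [hc, h1, h2])

end FinGraph
namespace FinGraph

variable {G : FinGraph}

lemma exists_next (u : G.H → ℝ) (hu : G.IsBalanced u) (e : G.H) (he : u e ≠ 0) :
    ∃ e', u e' ≠ 0 ∧ G.src e' = G.tar e ∧ e' ≠ G.bar e := by
  classical
  have hsum := hu.2 (G.tar e)
  have hmem : e ∈ Finset.univ.filter (fun h => G.tar h = G.tar e) := by simp
  have hex : ∃ h ∈ Finset.univ.filter (fun h => G.tar h = G.tar e), h ≠ e ∧ u h ≠ 0 := by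
    by_contra hcon
    push_neg at hcon
    have := Finset.sum_eq_single_of_mem e hmem (fun b hb hne => hcon b hb hne)
    rw [hsum] at this
    exact he this.symm
  obtain ⟨h, hh, hne, huh⟩ := hex
  have htar : G.tar h = G.tar e := (Finset.mem_filter.mp hh).2
  refine ⟨G.bar h, ?_, ?_, ?_⟩
  · rw [hu.1 h]
    simpa using huh
  · show G.src (G.bar h) = G.tar e
    rw [FinGraph.src, G.bar_invol, htar]
  · intro hEq
    exact hne (bar_injective G hEq)

/-- KEY: from a nonzero balanced real function, extract a simple integer cycle
supported on its support. -/
lemma exists_simple_cycle (u : G.H → ℝ) (hu : G.IsBalanced u) (e₀ : G.H) (h0 : u e₀ ≠ 0) :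
    ∃ c ∈ G.cycles, (∃ e₁, c e₁ = 1) ∧ ∀ e, c e ≠ 0 → u e ≠ 0 := by
  classical
  -- build an infinite non-backtracking walk in the support of u
  let T := {e : G.H // u e ≠ 0}
  let nextT : T → T := fun x =>
    ⟨(exists_next u hu x.1 x.2).choose, (exists_next u hu x.1 x.2).choose_spec.1⟩
  let f : ℕ → T := fun n => nextT^[n] ⟨e₀, h0⟩
  let g : ℕ → G.H := fun n => (f n).1
  have hgsupp : ∀ n, u (g n) ≠ 0 := fun n => (f n).2
  have hstep : ∀ n, f (n + 1) = nextT (f n) := by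
    intro n
    simp only [f, Function.iterate_succ_apply']
  have hadj' : ∀ n, G.src (g (n + 1)) = G.tar (g n) := by
    intro n
    have := (exists_next u hu (f n).1 (f n).2).choose_spec.2.1
    simpa [g, hstep n, nextT] using this
  have hnb : ∀ n, g (n + 1) ≠ G.bar (g n) := by
    intro n
    have := (exists_next u hu (f n).1 (f n).2).choose_spec.2.2
    simpa [g, hstep n, nextT] using this
  -- pigeonhole
  have hD : ∃ d, 0 < d ∧ ∃ m, g (m + d) = g m ∨ g (m + d) = G.bar (g m) := by
    obtain ⟨m, n, hmn, heq⟩ := Finite.exists_ne_map_eq_of_infinite g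
    rcases Nat.lt_or_ge m n with h | h
    · exact ⟨n - m, by omega, m, by rw [show m + (n - m) = n by omega]; exact Or.inl heq.symm⟩
    · have h' : n < m := by omega
      exact ⟨m - n, by omega, n, by rw [show n + (m - n) = m by omega]; exact Or.inl heq⟩
  classical
  let d₀ := Nat.find hD
  obtain ⟨hd0pos, m, hm⟩ : 0 < d₀ ∧ ∃ m, g (m + d₀) = g m ∨ g (m + d₀) = G.bar (g m) :=
    Nat.find_spec hD
  have hmin : ∀ d, 0 < d → d < d₀ → ∀ m', g (m' + d) ≠ g m' ∧ g (m' + d) ≠ G.bar (g m') := by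
    intro d hd hdlt m'
    have h := Nat.find_min hD hdlt
    push_neg at h
    exact h hd m'
  -- helper to appy walk_cycle with a window [a, a+L)
  have helper : ∀ (a L : ℕ), 0 < L → L ≤ d₀ →
      G.src (g a) = G.tar (g (a + (L - 1))) →
      ∃ c ∈ G.cycles, (∃ e₁, c e₁ = 1) ∧ ∀ e, c e ≠ 0 → u e ≠ 0 := by
    intro a L hL hLd hwrap
    have hdis : ∀ i j, i < j → j < L → g (a + j) ≠ g (a + i) ∧ g (a + j) ≠ G.bar (g (a + i)) := by
      intro i j hij hjL
      have h := hmin (j - i) (by omega) (by omega) (a + i)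
      rw [show a + i + (j - i) = a + j by omega] at h
      exact h
    set w : ℕ → G.H := fun i => g (a + i % L) with hw
    have hadjw : ∀ i < L, G.src (w ((i + 1) % L)) = G.tar (w i) := by
      intro i hiL
      rcases Nat.lt_or_ge (i + 1) L with h | h
      · have h1 : (i + 1) % L = i + 1 := Nat.mod_eq_of_lt h
        have h2 : i % L = i := Nat.mod_eq_of_lt hiL
        simp only [hw, h1, h2]
        rw [show a + (i + 1) = a + i + 1 by omega]
        exact hadj' (a + i)
      · have hiL1 : i = L - 1 := by omega
        have h1 : (i + 1) % L = 0 := by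
          rw [show i + 1 = L by omega]
          exact Nat.mod_self L
        have h2 : i % L = i := Nat.mod_eq_of_lt hiL
        simp only [hw, h1, h2, Nat.zero_mod]
        rw [hiL1, Nat.add_zero]
        exact hwrap
    have hdisw : ∀ i j, i < j → j < L → w j ≠ w i ∧ w j ≠ G.bar (w i) := by
      intro i j hij hjL
      simp only [hw, Nat.mod_eq_of_lt hjL, Nat.mod_eq_of_lt (lt_trans hij hjL)]
      exact hdis i j hij hjL
    obtain ⟨c, hc, hc1, hcsupp⟩ := walk_cycle L hL w hadjw hdisw
    refine ⟨c, hc, ⟨w 0, hc1⟩, ?_⟩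
    intro e hce
    obtain ⟨i, hiL, hi⟩ := hcsupp e hce
    rcases hi with h | h
    · rw [← h]; exact hgsupp _
    · have : u (G.bar e) ≠ 0 := by rw [← h]; exact hgsupp _
      intro h0'
      rw [hu.1 e, h0'] at this
      simp at this
  rcases hm with h1 | h2
  · -- closed: window [m, m + d₀)
    refine helper m d₀ hd0pos le_rfl ?_
    have := hadj' (m + (d₀ - 1))
    rw [show m + (d₀ - 1) + 1 = m + d₀ by omega] at this
    rw [← this, h1]
  · -- reversal: window [m+1, m+1 + (d₀-1))
    have hd2 : 2 ≤ d₀ := by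
      by_contra hcon
      have : d₀ = 1 := by omega
      rw [this] at h2
      exact hnb m h2
    refine helper (m + 1) (d₀ - 1) (by omega) (by omega) ?_
    have hA : G.src (g (m + 1)) = G.tar (g m) := hadj' m
    have hB : G.src (g (m + d₀)) = G.tar (g (m + d₀ - 1)) := by
      have := hadj' (m + d₀ - 1)
      rw [show m + d₀ - 1 + 1 = m + d₀ by omega] at this
      exact this
    have hC : G.src (g (m + d₀)) = G.tar (g m) := by
      rw [FinGraph.src, h2, G.bar_invol]
    rw [show m + 1 + (d₀ - 1 - 1) = m + d₀ - 1 by omega, hA, ← hC, hB]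

end FinGraph
namespace FinGraph

variable {G : FinGraph}

/-- Coercion of an integer cycle to a real cocycle. -/
def coeR (c : G.H → ℤ) : G.H → ℝ := fun e => (c e : ℝ)

lemma coeR_mem {c : G.H → ℤ} (hc : c ∈ G.cycles) : coeR c ∈ G.Omega ℝ := by
  refine ⟨fun e => ?_, fun v => ?_⟩
  · show ((c (G.bar e) : ℤ) : ℝ) = -(c e : ℝ)
    rw [hc.1 e]
    push_cast
    ring
  · show ∑ e ∈ Finset.univ.filter (fun e => G.tar e = v), ((c e : ℤ) : ℝ) = 0
    rw [← Int.cast_sum, hc.2 v, Int.cast_zero]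

lemma coeR_eq_zero {c : G.H → ℤ} (h : coeR c = 0) : c = 0 := by
  funext e
  have := congrFun h e
  simpa [coeR] using this

/-- If a balanced real function is supported where `lam = 0`, it vanishes. -/
lemma vanish (lam : G.H → ℝ) (hlam : G.IsLengthFunction lam)
    (u : G.H → ℝ) (hu : G.IsBalanced u) (h : ∀ e, lam e ≠ 0 → u e = 0) : u = 0 := by
  by_contra hne
  obtain ⟨e₀, h0⟩ := Function.ne_iff.mp hne
  obtain ⟨c, hc, ⟨e₁, hc1⟩, hsupp⟩ := exists_simple_cycle u hu e₀ h0
  have hcne : c ≠ 0 := by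
    intro hh
    rw [hh] at hc1
    simp at hc1
  obtain ⟨e, hce, hle⟩ := hlam.2.2 c hc hcne
  have hue : u e ≠ 0 := hsupp e hce
  have hl0 : lam e = 0 := by
    by_contra hl
    exact hue (h e hl)
  rw [hl0] at hle
  norm_num at hle

/-- Triangular family of integer cycles spanning all cycles supported on `S`. -/
lemma family (S : Finset G.H) :
    ∃ (k : ℕ) (c : Fin k → (G.H → ℤ)),
      (∀ i, c i ∈ G.cycles) ∧
      (∀ i, ∀ e ∉ S, c i e = 0) ∧
      (∀ d : G.H → ℤ, d ∈ G.cycles → (∀ e ∉ S, d e = 0) →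
        ∃ m : Fin k → ℤ, d = ∑ i, m i • c i) ∧
      (∀ u : G.H → ℝ, u ∈ G.Omega ℝ → (∀ e ∉ S, u e = 0) →
        ∃ r : Fin k → ℝ, u = ∑ i, r i • coeR (c i)) ∧
      LinearIndependent ℝ (fun i => coeR (c i)) := by
  classical
  induction S using Finset.strongInductionOn with
  | _ S ih =>
  by_cases hex : ∃ u : G.H → ℝ, u ∈ G.Omega ℝ ∧ (∀ e ∉ S, u e = 0) ∧ u ≠ 0
  · obtain ⟨u, humem, husupp, hune⟩ := hex
    obtain ⟨e₀, h0⟩ := Function.ne_iff.mp hune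
    obtain ⟨c₀, hc₀, ⟨e₁, hc1⟩, hsupp₀⟩ := exists_simple_cycle u humem e₀ h0
    have hc₀S : ∀ e ∉ S, c₀ e = 0 := by
      intro e heS
      by_contra hne
      exact hsupp₀ e hne (husupp e heS)
    have he₁S : e₁ ∈ S := by
      by_contra hcon
      have := hc₀S e₁ hcon
      rw [hc1] at this
      norm_num at this
    set S' := S \ {e₁, G.bar e₁} with hS'
    have hss : S' ⊂ S := by
      refine Finset.ssubset_iff_of_subset (Finset.sdiff_subset) |>.mpr ?_
      exact ⟨e₁, he₁S, by simp [hS']⟩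
    obtain ⟨k, cc, hmem, hcsupp, hint, hreal, hind⟩ := ih S' hss
    have hS'char : ∀ e, e ∉ S' ↔ (e ∉ S ∨ e = e₁ ∨ e = G.bar e₁) := by
      intro e
      simp only [hS', Finset.mem_sdiff, Finset.mem_insert, Finset.mem_singleton]
      tauto
    have hS'sub : S' ⊆ S := Finset.sdiff_subset
    have he₁S' : e₁ ∉ S' := by
      rw [hS'char]
      right; left; rfl
    refine ⟨k + 1, Fin.cons c₀ cc, ?_, ?_, ?_, ?_, ?_⟩
    · intro i
      refine Fin.cases ?_ ?_ i
      · simpa using hc₀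
      · intro j; simpa using hmem j
    · intro i
      refine Fin.cases ?_ ?_ i
      · intro e he; simpa using hc₀S e he
      · intro j e he
        have : e ∉ S' := fun h => he (hS'sub h)
        simpa using hcsupp j e this
    · -- integer combinations
      intro d hd hdS
      set d' : G.H → ℤ := d - (d e₁) • c₀ with hd'
      have hd'mem : d' ∈ G.cycles := AddSubgroup.sub_mem _ hd (AddSubgroup.zsmul_mem _ hc₀ _)
      have hd'S : ∀ e ∉ S', d' e = 0 := by
        intro e heS'
        rcases (hS'char e).mp heS' with h | h | h
        · simp [hd', hdS e h, hc₀S e h]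
        · subst h
          simp [hd', hc1]
        · subst h
          have h1 : d (G.bar e₁) = -d e₁ := hd.1 e₁
          have h2 : c₀ (G.bar e₁) = -c₀ e₁ := hc₀.1 e₁
          simp [hd', h1, h2, hc1]
      obtain ⟨m', hm'⟩ := hint d' hd'mem hd'S
      refine ⟨Fin.cons (d e₁) m', ?_⟩
      rw [Fin.sum_univ_succ]
      simp only [Fin.cons_zero, Fin.cons_succ]
      rw [← hm', hd']
      abel
    · -- real combinations
      intro v hv hvS
      set v' : G.H → ℝ := v - (v e₁) • coeR c₀ with hv'
      have hv'mem : v' ∈ G.Omega ℝ := Submodule.sub_mem _ hv (Submodule.smul_mem _ _ (coeR_mem hc₀))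
      have hv'S : ∀ e ∉ S', v' e = 0 := by
        intro e heS'
        rcases (hS'char e).mp heS' with h | h | h
        · simp [hv', hvS e h, coeR, hc₀S e h]
        · subst h
          simp [hv', coeR, hc1]
        · subst h
          have h1 : v (G.bar e₁) = -v e₁ := hv.1 e₁
          have h2 : c₀ (G.bar e₁) = -c₀ e₁ := hc₀.1 e₁
          simp [hv', coeR, h1, h2, hc1]
      obtain ⟨r', hr'⟩ := hreal v' hv'mem hv'S
      refine ⟨Fin.cons (v e₁) r', ?_⟩
      rw [Fin.sum_univ_succ]
      simp only [Fin.cons_zero, Fin.cons_succ]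
      rw [← hr', hv']
      abel
    · -- linear independence
      have hfun : (fun i : Fin (k + 1) => coeR ((Fin.cons c₀ cc : Fin (k + 1) → G.H → ℤ) i))
          = Fin.cons (coeR c₀) (fun j => coeR (cc j)) := by
        funext i
        refine Fin.cases ?_ ?_ i <;> simp
      rw [hfun]
      refine LinearIndependent.fin_cons hind ?_
      intro hmem'
      have hker : Submodule.span ℝ (Set.range fun j => coeR (cc j))
          ≤ LinearMap.ker (LinearMap.proj (R := ℝ) (φ := fun _ : G.H => ℝ) e₁) := by
        rw [Submodule.span_le]
        rintro x ⟨j, rfl⟩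
        have hccS' : cc j e₁ = 0 := hcsupp j e₁ he₁S'
        simp [LinearMap.mem_ker, coeR, hccS']
      have := hker hmem'
      simp only [LinearMap.mem_ker, LinearMap.proj_apply] at this
      rw [show coeR c₀ e₁ = 1 by simp [coeR, hc1]] at this
      norm_num at this
  · refine ⟨0, Fin.elim0, fun i => i.elim0, fun i => i.elim0, ?_, ?_, ?_⟩
    · intro d hd hdS
      have hd0 : d = 0 := by
        by_contra hne
        exact hex ⟨coeR d, coeR_mem hd, fun e he => by simp [coeR, hdS e he],
          fun h => hne (coeR_eq_zero h)⟩
      exact ⟨Fin.elim0, by simp [hd0]⟩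
    · intro v hv hvS
      have hv0 : v = 0 := by
        by_contra hne
        exact hex ⟨v, hv, hvS, hne⟩
      exact ⟨Fin.elim0, by simp [hv0]⟩
    · exact linearIndependent_empty_type

end FinGraph
namespace FinGraph

variable {G : FinGraph}

/-- Riesz representation for the positive-definite pairing on `Omega ℝ`. -/
lemma riesz (lam : G.H → ℝ) (hlam : G.IsLengthFunction lam)
    (f : ↥(G.Omega ℝ) →ₗ[ℝ] ℝ) :
    ∃ u : ↥(G.Omega ℝ), ∀ v : ↥(G.Omega ℝ),
      (∑ e, lam e * ((u : G.H → ℝ) e * (v : G.H → ℝ) e)) = f v := by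
  classical
  let T : ↥(G.Omega ℝ) →ₗ[ℝ] Module.Dual ℝ ↥(G.Omega ℝ) :=
    { toFun := fun u =>
        { toFun := fun v => ∑ e, lam e * ((u : G.H → ℝ) e * (v : G.H → ℝ) e)
          map_add' := by
            intro v₁ v₂
            rw [← Finset.sum_add_distrib]
            refine Finset.sum_congr rfl (fun e _ => ?_)
            simp [Submodule.coe_add, Pi.add_apply]
            ring
          map_smul' := by
            intro r v
            rw [Finset.smul_sum]
            refine Finset.sum_congr rfl (fun e _ => ?_)
            simp [Submodule.coe_smul, Pi.smul_apply, smul_eq_mul]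
            ring }
      map_add' := by
        intro u₁ u₂
        ext v
        show (∑ e : G.H, (_ : ℝ)) = (∑ e : G.H, (_ : ℝ)) + (∑ e : G.H, (_ : ℝ))
        rw [← Finset.sum_add_distrib]
        refine Finset.sum_congr rfl (fun e _ => ?_)
        simp [Submodule.coe_add, Pi.add_apply]
        ring
      map_smul' := by
        intro r u
        ext v
        show (∑ e : G.H, _) = r * (∑ e : G.H, _)
        rw [Finset.mul_sum]
        refine Finset.sum_congr rfl (fun e _ => ?_)
        simp [Submodule.coe_smul, Pi.smul_apply, smul_eq_mul]
        ring }
  have hinj : Function.Injective T := by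
    rw [← LinearMap.ker_eq_bot, LinearMap.ker_eq_bot']
    intro u hu
    have h0 : ∑ e, lam e * ((u : G.H → ℝ) e * (u : G.H → ℝ) e) = 0 := by
      have := congrFun (congrArg (fun (g : Module.Dual ℝ ↥(G.Omega ℝ)) => g.toFun) hu) u
      simpa [T] using this
    have hterm : ∀ e ∈ Finset.univ, lam e * ((u : G.H → ℝ) e * (u : G.H → ℝ) e) = 0 := by
      rw [← Finset.sum_eq_zero_iff_of_nonneg]
      · exact h0
      · intro e _
        exact mul_nonneg (hlam.1 e).1 (mul_self_nonneg _)
    have hzero : ∀ e, lam e ≠ 0 → (u : G.H → ℝ) e = 0 := by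
      intro e hl
      have := hterm e (Finset.mem_univ e)
      rcases mul_eq_zero.mp this with h | h
      · exact absurd h hl
      · exact mul_self_eq_zero.mp h
    have : (u : G.H → ℝ) = 0 := vanish lam hlam _ u.2 hzero
    exact Subtype.ext this
  have hsurj : Function.Surjective T :=
    (LinearMap.injective_iff_surjective_of_finrank_eq_finrank
      Subspace.dual_finrank_eq.symm).mp hinj
  obtain ⟨u, hu⟩ := hsurj f
  refine ⟨u, fun v => ?_⟩
  have := congrArg (fun g => g v) hu
  simpa [T] using this

/-- Every linear map on `Omega ℝ` is represented by some `ω ∈ Omega W`. -/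
lemma represent (lam : G.H → ℝ) (hlam : G.IsLengthFunction lam)
    (W : Type) [NormedAddCommGroup W] [InnerProductSpace ℝ W] [FiniteDimensional ℝ W]
    (Φ : ↥(G.Omega ℝ) →ₗ[ℝ] W) :
    ∃ ω ∈ G.Omega W, ∀ v : ↥(G.Omega ℝ),
      ∑ e, (lam e * (v : G.H → ℝ) e) • ω e = Φ v := by
  classical
  let b := stdOrthonormalBasis ℝ W
  let fα : Fin (Module.finrank ℝ W) → (↥(G.Omega ℝ) →ₗ[ℝ] ℝ) := fun α =>
    ((innerSL ℝ (b α)).toLinearMap).comp Φ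
  choose u hu using fun α => riesz lam hlam (fα α)
  refine ⟨fun e => ∑ α, ((u α : G.H → ℝ) e) • b α, ⟨fun e => ?_, fun v => ?_⟩, fun v => ?_⟩
  · -- antisymmetry
    rw [← Finset.sum_neg_distrib]
    refine Finset.sum_congr rfl (fun α _ => ?_)
    rw [(u α).2.1 e]
    simp
  · -- vertex sums
    rw [Finset.sum_comm]
    refine Finset.sum_eq_zero (fun α _ => ?_)
    rw [← Finset.sum_smul]
    rw [(u α).2.2 v]
    simp
  · -- representation
    have step : ∀ e, (lam e * (v : G.H → ℝ) e) • ∑ α, ((u α : G.H → ℝ) e) • b α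
        = ∑ α, (lam e * ((u α : G.H → ℝ) e * (v : G.H → ℝ) e)) • b α := by
      intro e
      rw [Finset.smul_sum]
      refine Finset.sum_congr rfl (fun α _ => ?_)
      rw [smul_smul]
      ring_nf
    rw [Finset.sum_congr rfl (fun e _ => step e), Finset.sum_comm]
    have : ∀ α, ∑ e, (lam e * ((u α : G.H → ℝ) e * (v : G.H → ℝ) e)) • b α
        = ((b.repr (Φ v)) α) • b α := by
      intro α
      rw [← Finset.sum_smul]
      congr 1
      rw [hu α v]
      rw [b.repr_apply_apply]
      rfl
    rw [Finset.sum_congr rfl (fun α _ => this α)]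
    exact b.sum_repr (Φ v)

end FinGraph
/-- for any length function `λ` on `Γ`, the map
`λ_* : Ω¹(Γ,V) → Hom(H₁(Γ), V)`, `λ_*(ω)(Σ nᵢeᵢ) = 2 Σ nᵢ λ(eᵢ) ω(eᵢ)`, is an
isomorphism. (Summing over all half-edges, each edge is counted twice, which
accounts for the factor 2.) -/
theorem lambdaStar_isomorphism (G : FinGraph) (hconn : G.Connected)
    (W : Type) [NormedAddCommGroup W] [InnerProductSpace ℝ W] [FiniteDimensional ℝ W]
    (lam : G.H → ℝ) (hlam : G.IsLengthFunction lam) :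
    Function.Injective
        (fun (ω : ↥(G.Omega W)) => (fun c : ↥G.cycles =>
          ∑ e : G.H, (((c : G.H → ℤ) e : ℝ) * lam e) • (ω : G.H → W) e)) ∧
      ∀ φ : ↥G.cycles →+ W, ∃ ω ∈ G.Omega W, ∀ c : ↥G.cycles,
        φ c = ∑ e : G.H, (((c : G.H → ℤ) e : ℝ) * lam e) • ω e := by
  classical
  obtain ⟨k, cf, hmem, hsupp, hint, hreal, hind⟩ := FinGraph.family (G := G) Finset.univ
  constructor
  · -- injectivity
    intro ω₁ ω₂ h
    set ψ : G.H → W := (ω₁ : G.H → W) - (ω₂ : G.H → W) with hψdef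
    have hψmem : ψ ∈ G.Omega W := Submodule.sub_mem _ ω₁.2 ω₂.2
    -- the pairing map with ψ
    let Pψ : (G.H → ℝ) →ₗ[ℝ] W :=
      { toFun := fun v => ∑ e, (lam e * v e) • ψ e
        map_add' := by
          intro v₁ v₂
          rw [← Finset.sum_add_distrib]
          refine Finset.sum_congr rfl (fun e _ => ?_)
          rw [Pi.add_apply, mul_add, add_smul]
        map_smul' := by
          intro r v
          rw [RingHom.id_apply, Finset.smul_sum]
          refine Finset.sum_congr rfl (fun e _ => ?_)
          rw [Pi.smul_apply, smul_eq_mul, smul_smul]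
          ring_nf }
    have hPint : ∀ c : G.H → ℤ, c ∈ G.cycles → Pψ (FinGraph.coeR c) = 0 := by
      intro c hc
      have hc' := congrFun h (⟨c, hc⟩ : ↥G.cycles)
      simp only at hc'
      show ∑ e, (lam e * FinGraph.coeR c e) • ψ e = 0
      have : ∀ e, (lam e * FinGraph.coeR c e) • ψ e
          = ((c e : ℝ) * lam e) • (ω₁ : G.H → W) e - ((c e : ℝ) * lam e) • (ω₂ : G.H → W) e := by
        intro e
        rw [hψdef, Pi.sub_apply, smul_sub]
        rw [show lam e * FinGraph.coeR c e = (c e : ℝ) * lam e by rw [FinGraph.coeR]; ring]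
      rw [Finset.sum_congr rfl (fun e _ => this e), Finset.sum_sub_distrib, hc']
      simp
    have hPall : ∀ u : G.H → ℝ, u ∈ G.Omega ℝ → Pψ u = 0 := by
      intro u hu
      obtain ⟨r, hr⟩ := hreal u hu (by intro e he; exact absurd (Finset.mem_univ e) he)
      rw [hr, map_sum]
      refine Finset.sum_eq_zero (fun i _ => ?_)
      rw [map_smul, hPint (cf i) (hmem i), smul_zero]
    have hψ0 : ψ = 0 := by
      funext e₀
      rw [Pi.zero_apply]
      set x : W := ψ e₀ with hx
      set ux : G.H → ℝ := fun e => (inner ℝ (ψ e) x : ℝ) with hux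
      have huxmem : ux ∈ G.Omega ℝ := by
        refine ⟨fun e => ?_, fun v => ?_⟩
        · show (inner ℝ (ψ (G.bar e)) x : ℝ) = - inner ℝ (ψ e) x
          rw [hψmem.1 e, inner_neg_left]
        · show ∑ e ∈ Finset.univ.filter (fun e => G.tar e = v), (inner ℝ (ψ e) x : ℝ) = 0
          rw [← sum_inner, hψmem.2 v, inner_zero_left]
      have hB : ∑ e, lam e * (ux e * ux e) = 0 := by
        have h0 : (inner ℝ (Pψ ux) x : ℝ) = 0 := by rw [hPall ux huxmem, inner_zero_left]
        rw [← h0]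
        show ∑ e, lam e * (ux e * ux e) = (inner ℝ (∑ e, (lam e * ux e) • ψ e) x : ℝ)
        rw [sum_inner]
        refine Finset.sum_congr rfl (fun e _ => ?_)
        rw [real_inner_smul_left]
        show lam e * (ux e * ux e) = lam e * ux e * (inner ℝ (ψ e) x : ℝ)
        rw [hux]
        ring
      have hterm : ∀ e ∈ Finset.univ, lam e * (ux e * ux e) = 0 := by
        rw [← Finset.sum_eq_zero_iff_of_nonneg]
        · exact hB
        · exact fun e _ => mul_nonneg (hlam.1 e).1 (mul_self_nonneg _)
      have hzero : ∀ e, lam e ≠ 0 → ux e = 0 := by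
        intro e hl
        rcases mul_eq_zero.mp (hterm e (Finset.mem_univ e)) with hcase | hcase
        · exact absurd hcase hl
        · exact mul_self_eq_zero.mp hcase
      have hux0 : ux = 0 := FinGraph.vanish lam hlam ux huxmem hzero
      have : (inner ℝ (ψ e₀) (ψ e₀) : ℝ) = 0 := by
        have := congrFun hux0 e₀
        simpa [hux, hx] using this
      exact inner_self_eq_zero.mp this
    have : (ω₁ : G.H → W) = (ω₂ : G.H → W) := by
      have := sub_eq_zero.mp (hψdef ▸ hψ0)
      exact this
    exact Subtype.ext this
  · -- surjectivity
    intro φ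
    set vR : Fin k → ↥(G.Omega ℝ) := fun i => ⟨FinGraph.coeR (cf i), FinGraph.coeR_mem (hmem i)⟩
      with hvR
    have hindv : LinearIndependent ℝ vR := by
      refine LinearIndependent.of_comp (G.Omega ℝ).subtype ?_
      have : (⇑(G.Omega ℝ).subtype ∘ vR) = fun i => FinGraph.coeR (cf i) := rfl
      rw [this]
      exact hind
    have hspan : ⊤ ≤ Submodule.span ℝ (Set.range vR) := by
      intro x _
      obtain ⟨r, hr⟩ := hreal (x : G.H → ℝ) x.2 (by intro e he; exact absurd (Finset.mem_univ e) he)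
      have hxeq : x = ∑ i, r i • vR i := by
        apply Subtype.ext
        rw [hr]
        have : ((∑ i, r i • vR i : ↥(G.Omega ℝ)) : G.H → ℝ) = ∑ i, r i • (vR i : G.H → ℝ) := by
          simp
        rw [this]
      rw [hxeq]
      exact Submodule.sum_mem _ (fun i _ =>
        Submodule.smul_mem _ _ (Submodule.subset_span ⟨i, rfl⟩))
    let bb : Module.Basis (Fin k) ℝ ↥(G.Omega ℝ) := Module.Basis.mk hindv hspan
    let Φ : ↥(G.Omega ℝ) →ₗ[ℝ] W := bb.constr ℝ (fun i => φ ⟨cf i, hmem i⟩)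
    obtain ⟨ω, hωmem, hrep⟩ := FinGraph.represent lam hlam W Φ
    refine ⟨ω, hωmem, ?_⟩
    intro c'
    obtain ⟨m, hm⟩ := hint (c' : G.H → ℤ) c'.2 (by intro e he; exact absurd (Finset.mem_univ e) he)
    -- RHS equals Φ applied to the coercion of c'
    have hRHS : ∑ e : G.H, (((c' : G.H → ℤ) e : ℝ) * lam e) • ω e
        = Φ (⟨FinGraph.coeR (c' : G.H → ℤ), FinGraph.coeR_mem c'.2⟩ : ↥(G.Omega ℝ)) := by
      rw [← hrep]
      refine Finset.sum_congr rfl (fun e _ => ?_)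
      congr 1
      show ((c' : G.H → ℤ) e : ℝ) * lam e = lam e * FinGraph.coeR (c' : G.H → ℤ) e
      rw [FinGraph.coeR]
      ring
    have hcoeeq : (⟨FinGraph.coeR (c' : G.H → ℤ), FinGraph.coeR_mem c'.2⟩ : ↥(G.Omega ℝ))
        = ∑ i, (m i : ℝ) • vR i := by
      apply Subtype.ext
      have hc : ((∑ i, (m i : ℝ) • vR i : ↥(G.Omega ℝ)) : G.H → ℝ)
          = ∑ i, (m i : ℝ) • (vR i : G.H → ℝ) := by simp
      rw [hc]
      funext e
      have he := congrFun hm e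
      rw [Finset.sum_apply] at he
      simp only [Pi.smul_apply, smul_eq_mul] at he
      show ((c' : G.H → ℤ) e : ℝ) = _
      rw [he]
      rw [Finset.sum_apply]
      push_cast
      refine Finset.sum_congr rfl (fun i _ => ?_)
      simp [FinGraph.coeR, hvR]
    have hΦ : Φ (⟨FinGraph.coeR (c' : G.H → ℤ), FinGraph.coeR_mem c'.2⟩ : ↥(G.Omega ℝ))
        = ∑ i, (m i : ℝ) • φ ⟨cf i, hmem i⟩ := by
      rw [hcoeeq, map_sum]
      refine Finset.sum_congr rfl (fun i _ => ?_)
      rw [map_smul]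
      congr 1
      have : vR i = bb i := by rw [Module.Basis.mk_apply]
      rw [this]
      exact Module.Basis.constr_basis bb ℝ _ i
    have hφ : φ c' = ∑ i, (m i : ℝ) • φ ⟨cf i, hmem i⟩ := by
      have hc'eq : c' = ∑ i, m i • (⟨cf i, hmem i⟩ : ↥G.cycles) := by
        apply Subtype.ext
        have hcoe : ((∑ i, m i • (⟨cf i, hmem i⟩ : ↥G.cycles) : ↥G.cycles) : G.H → ℤ)
            = ∑ i, m i • cf i := by
          rw [show ((∑ i, m i • (⟨cf i, hmem i⟩ : ↥G.cycles) : ↥G.cycles) : G.H → ℤ)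
              = G.cycles.subtype (∑ i, m i • (⟨cf i, hmem i⟩ : ↥G.cycles)) from rfl, map_sum]
          refine Finset.sum_congr rfl (fun i _ => ?_)
          rw [map_zsmul]
          rfl
        rw [hcoe]
        exact hm
      rw [hc'eq, map_sum]
      refine Finset.sum_congr rfl (fun i _ => ?_)
      rw [map_zsmul]
      rw [Int.cast_smul_eq_zsmul]
    rw [hRHS, hΦ, ← hφ]
end

section
/- There exists a scalar product on H₁(Γ, ℝ) such that for the canonical cocycle ω = ω(Γ,λ), ⟨ω(e), ω(e')⟩ ≤ 0 for any two distinct half-edges e, e' that either have the same source, or whose sources are connected by a path disjoint from e, e' all of whose edges have less than maximal length. -/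
open Finset

namespace FinGraph

variable {G : FinGraph}

lemma src_bar (G : FinGraph) (h : G.H) : G.src (G.bar h) = G.tar h := by
  unfold src; rw [G.bar_invol]

lemma tar_bar (G : FinGraph) (h : G.H) : G.tar (G.bar h) = G.src h := rfl

lemma reach_mono {A B : Set G.H} (hAB : A ⊆ B) {v w : G.V} (h : G.ReachIn A v w) :
    G.ReachIn B v w := by
  refine Relation.ReflTransGen.mono ?_ _ _ h
  rintro a b ⟨x, hx, h1, h2⟩; exact ⟨x, hAB hx, h1, h2⟩

lemma reach_single {A : Set G.H} {x : G.H} (hx : x ∈ A) :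
    G.ReachIn A (G.src x) (G.tar x) := Relation.ReflTransGen.single ⟨x, hx, rfl, rfl⟩

lemma reach_symm {A : Set G.H} (hbar : ∀ h ∈ A, G.bar h ∈ A) {v w : G.V}
    (h : G.ReachIn A v w) : G.ReachIn A w v := by
  induction h with
  | refl => exact Relation.ReflTransGen.refl
  | tail _ step ih =>
    obtain ⟨x, hxA, hsrc, htar⟩ := step
    refine Relation.ReflTransGen.trans (Relation.ReflTransGen.single ?_) ih
    exact ⟨G.bar x, hbar x hxA, by rw [src_bar, htar], by rw [tar_bar, hsrc]⟩

/-- The reachable set is closed under steps. -/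
lemma reach_closed {A : Set G.H} {a v : G.V} (hv : G.ReachIn A a v) {x : G.H}
    (hx : x ∈ A) (hsrc : G.src x = v) : G.ReachIn A a (G.tar x) :=
  Relation.ReflTransGen.tail hv ⟨x, hx, hsrc, rfl⟩

/-- Cut-sum identity: the sum of an antisymmetric function over half-edges entering `S`
equals the sum of divergences over `S`. -/
lemma cut_sum {M : Type*} [AddCommGroup M] (m : G.H → M) (S : Set G.V)
    [DecidablePred (· ∈ S)] (hanti : ∀ h, m (G.bar h) = - m h) :
    ∑ h ∈ univ.filter (fun h => G.tar h ∈ S ∧ G.src h ∉ S), m h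
      = ∑ v ∈ univ.filter (fun v => v ∈ S), ∑ e ∈ univ.filter (fun e => G.tar e = v), m e := by
  have key : ∑ v ∈ univ.filter (fun v => v ∈ S), ∑ e ∈ univ.filter (fun e => G.tar e = v), m e
      = ∑ h ∈ univ.filter (fun h => G.tar h ∈ S), m h := by
    calc ∑ v ∈ univ.filter (fun v => v ∈ S), ∑ e ∈ univ.filter (fun e => G.tar e = v), m e
        = ∑ v ∈ univ.filter (fun v => v ∈ S), ∑ e : G.H, if G.tar e = v then m e else 0 := by
          refine Finset.sum_congr rfl fun v _ => ?_
          rw [Finset.sum_filter]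
      _ = ∑ e : G.H, ∑ v ∈ univ.filter (fun v => v ∈ S), if G.tar e = v then m e else 0 :=
          Finset.sum_comm
      _ = ∑ e : G.H, if G.tar e ∈ univ.filter (fun v => v ∈ S) then m e else 0 := by
          refine Finset.sum_congr rfl fun e _ => ?_
          exact Finset.sum_ite_eq _ (G.tar e) (fun _ => m e)
      _ = ∑ h ∈ univ.filter (fun h => G.tar h ∈ S), m h := by
          rw [Finset.sum_filter]
          refine Finset.sum_congr rfl fun e _ => ?_
          simp
  rw [key]
  have split : ∑ h ∈ univ.filter (fun h => G.tar h ∈ S), m h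
      = (∑ h ∈ univ.filter (fun h => (G.tar h ∈ S) ∧ G.src h ∈ S), m h)
        + ∑ h ∈ univ.filter (fun h => (G.tar h ∈ S) ∧ G.src h ∉ S), m h := by
    rw [← Finset.sum_filter_add_sum_filter_not (univ.filter (fun h => G.tar h ∈ S))
      (fun h => G.src h ∈ S), Finset.filter_filter, Finset.filter_filter]
  have hzero : ∑ h ∈ univ.filter (fun h => (G.tar h ∈ S) ∧ G.src h ∈ S), m h = 0 := by
    refine Finset.sum_involution (fun a _ => G.bar a) ?_ ?_ ?_ ?_
    · intro a _; rw [hanti]; exact add_neg_cancel _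
    · intro a _ _; exact G.bar_ne a
    · intro a ha
      simp only [Finset.mem_filter, Finset.mem_univ, true_and] at ha ⊢
      rw [tar_bar, src_bar]
      exact ⟨ha.2, ha.1⟩
    · intro a _; exact G.bar_invol a
  rw [split, hzero, zero_add]


variable (G : FinGraph)

/-- The unit flow along a half-edge. -/
def unitFlow (x : G.H) : G.H → ℤ := fun h => (if h = x then 1 else 0) - (if h = G.bar x then 1 else 0)

variable {G}

lemma unitFlow_bar (x h : G.H) : G.unitFlow x (G.bar h) = - G.unitFlow x h := by
  unfold unitFlow
  have h1 : G.bar h = x ↔ h = G.bar x := by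
    constructor
    · intro hh; rw [← hh, G.bar_invol]
    · intro hh; rw [hh, G.bar_invol]
  have h2 : G.bar h = G.bar x ↔ h = x := by
    constructor
    · intro hh; rw [← G.bar_invol h, hh, G.bar_invol]
    · intro hh; rw [hh]
  simp only [h1, h2]; ring

lemma div_unitFlow (x : G.H) (v : G.V) :
    ∑ e ∈ univ.filter (fun e => G.tar e = v), G.unitFlow x e
      = (if G.tar x = v then 1 else 0) - (if G.src x = v then 1 else 0) := by
  unfold unitFlow
  rw [Finset.sum_sub_distrib]
  congr 1
  · rw [Finset.sum_filter]
    have : ∀ e : G.H, (if G.tar e = v then (if e = x then (1:ℤ) else 0) else 0)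
        = if e = x then (if G.tar x = v then 1 else 0) else 0 := by
      intro e
      by_cases he : e = x
      · subst he; simp
      · simp [he]
    simp only [this]
    rw [Finset.sum_ite_eq' univ x (fun _ => if G.tar x = v then (1:ℤ) else 0)]
    simp
  · rw [Finset.sum_filter]
    have : ∀ e : G.H, (if G.tar e = v then (if e = G.bar x then (1:ℤ) else 0) else 0)
        = if e = G.bar x then (if G.src x = v then 1 else 0) else 0 := by
      intro e
      by_cases he : e = G.bar x
      · subst he; simp [tar_bar]
      · simp [he]
    simp only [this]
    rw [Finset.sum_ite_eq' univ (G.bar x) (fun _ => if G.src x = v then (1:ℤ) else 0)]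
    simp

lemma unitFlow_self (x : G.H) : G.unitFlow x x = 1 := by
  unfold unitFlow; simp [(G.bar_ne x).symm]

lemma unitFlow_ne (x h : G.H) (h1 : h ≠ x) (h2 : h ≠ G.bar x) : G.unitFlow x h = 0 := by
  unfold unitFlow; simp [h1, h2]

/-- A flow realizing a reachability statement. -/
lemma flow_of_reach {A : Set G.H} {v w : G.V} (h : G.ReachIn A v w) :
    ∃ g : G.H → ℤ, (∀ x, g (G.bar x) = - g x) ∧ (∀ x, g x ≠ 0 → x ∈ A ∨ G.bar x ∈ A) ∧
      (∀ x, G.bar x ∉ A → 0 ≤ g x) ∧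
      ∀ u : G.V, ∑ e ∈ univ.filter (fun e => G.tar e = u), g e
        = (if w = u then 1 else 0) - (if v = u then 1 else 0) := by
  induction h with
  | refl =>
    refine ⟨0, by simp, by simp, by simp, fun u => by simp⟩
  | @tail b c _ step ih =>
    obtain ⟨g, hanti, hsupp, hpos, hdiv⟩ := ih
    obtain ⟨x, hxA, hsrc, htar⟩ := step
    refine ⟨g + G.unitFlow x, ?_, ?_, ?_, ?_⟩
    · intro y; simp only [Pi.add_apply, hanti y, unitFlow_bar]; ring
    · intro y hy
      by_cases hgy : g y = 0
      · have : G.unitFlow x y ≠ 0 := by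
          intro h0; apply hy; simp [Pi.add_apply, hgy, h0]
        by_cases h1 : y = x
        · exact Or.inl (h1 ▸ hxA)
        · by_cases h2 : y = G.bar x
          · right; rw [h2, G.bar_invol]; exact hxA
          · exact absurd (unitFlow_ne x y h1 h2) this
      · exact hsupp y hgy
    · intro y hy
      have h2 : y ≠ G.bar x := by
        intro h; apply hy; rw [h, G.bar_invol]; exact hxA
      have : 0 ≤ G.unitFlow x y := by
        unfold unitFlow; simp [h2]; positivity
      have := hpos y hy
      simp only [Pi.add_apply]; omega
    · intro u
      simp only [Pi.add_apply]
      rw [Finset.sum_add_distrib, hdiv u, div_unitFlow, htar, hsrc]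
      by_cases h1 : c = u <;> by_cases h2 : v = u <;> by_cases h3 : b = u <;> simp [h1, h2, h3] <;> ring


/-- Casting an integer balanced function to a real one. -/
lemma balanced_cast {c : G.H → ℤ} (hc : G.IsBalanced c) :
    G.IsBalanced (fun h => (c h : ℝ)) := by
  constructor
  · intro e; show ((c (G.bar e) : ℤ) : ℝ) = -((c e : ℤ) : ℝ); rw [hc.1 e]; push_cast; ring
  · intro v
    have h0 := hc.2 v
    have h1 : ((∑ e ∈ univ.filter (fun e => G.tar e = v), c e : ℤ) : ℝ) = 0 := by rw [h0]; simp
    rw [← h1]; push_cast; rfl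

lemma balanced_neg {c : G.H → ℤ} (hc : G.IsBalanced c) : G.IsBalanced (-c) := by
  constructor
  · intro e; simp [hc.1 e]
  · intro v; simp [Finset.sum_neg_distrib, hc.2 v]

/-- "No cycle in T": if `tar x` reaches `src x` in `T` avoiding `x, x̄`, with `x ∈ T`,
and `T` is acyclic, contradiction. -/
lemma no_T_cycle_reach {T : Finset G.H} (hbarT : ∀ h ∈ T, G.bar h ∈ T)
    (hacyc : ∀ c : G.H → ℝ, G.IsBalanced c → (∀ h, h ∉ T → c h = 0) → c = 0)
    {x : G.H} (hxT : x ∈ T)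
    (hr : G.ReachIn {h | h ∈ T ∧ h ≠ x ∧ h ≠ G.bar x} (G.tar x) (G.src x)) : False := by
  obtain ⟨g, hanti, hsupp, -, hdiv⟩ := flow_of_reach hr
  set c : G.H → ℤ := G.unitFlow x + g with hc
  have hcb : G.IsBalanced c := by
    constructor
    · intro e; simp only [hc, Pi.add_apply, unitFlow_bar, hanti]; ring
    · intro v
      simp only [hc, Pi.add_apply]
      rw [Finset.sum_add_distrib, div_unitFlow, hdiv]
      by_cases h1 : G.tar x = v <;> by_cases h2 : G.src x = v <;>
        simp [h1, h2, eq_comm] <;> ring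
  have hgx : g x = 0 := by
    by_contra hgx
    rcases hsupp x hgx with h | h
    · exact h.2.1 rfl
    · exact h.2.2 rfl
  have hsuppc : ∀ h, h ∉ T → (fun h => ((c h : ℝ))) h = 0 := by
    intro h hh
    simp only [Int.cast_eq_zero]
    by_cases h1 : h = x
    · exact absurd (h1 ▸ hxT) hh
    by_cases h2 : h = G.bar x
    · exfalso; apply hh; rw [h2]; exact hbarT x hxT
    have hg : g h = 0 := by
      by_contra hg
      rcases hsupp h hg with hmem | hmem
      · exact hh hmem.1
      · apply hh
        have := hbarT _ hmem.1
        rwa [G.bar_invol] at this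
    simp [hc, unitFlow_ne x h h1 h2, hg]
  have h0 := hacyc _ (balanced_cast hcb) hsuppc
  have hx1 : c x = 1 := by simp [hc, unitFlow_self, hgx]
  have h2 : ((c x : ℝ)) = 0 := by rw [congrFun h0 x]; rfl
  rw [hx1] at h2; norm_num at h2


open Classical in
/-- Along a positive edge of a balanced function one can return through positive edges. -/
lemma reach_pos {c : G.H → ℝ} (hc : G.IsBalanced c) {e₀ : G.H} (he₀ : 0 < c e₀) :
    G.ReachIn {h | 0 < c h} (G.tar e₀) (G.src e₀) := by
  by_contra hne
  set A : Set G.H := {h | 0 < c h} with hA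
  set S : Set G.V := {v | G.ReachIn A (G.tar e₀) v} with hS
  have hcut := cut_sum c S (hc.1)
  have hdiv0 : ∀ v, ∑ e ∈ univ.filter (fun e => G.tar e = v), c e = 0 := hc.2
  simp only [hdiv0, Finset.sum_const_zero] at hcut
  have hnonneg : ∀ h ∈ univ.filter (fun h => G.tar h ∈ S ∧ G.src h ∉ S), 0 ≤ c h := by
    intro h hh
    simp only [Finset.mem_filter, Finset.mem_univ, true_and] at hh
    by_contra hneg
    push_neg at hneg
    have hbarA : G.bar h ∈ A := by
      simp only [hA, Set.mem_setOf_eq, hc.1 h]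
      linarith
    have : G.src h ∈ S := by
      have := reach_closed hh.1 hbarA (by rw [src_bar])
      rwa [tar_bar] at this
    exact hh.2 this
  have hmem : e₀ ∈ univ.filter (fun h => G.tar h ∈ S ∧ G.src h ∉ S) := by
    simp only [Finset.mem_filter, Finset.mem_univ, true_and]
    exact ⟨Relation.ReflTransGen.refl, hne⟩
  have : 0 < ∑ h ∈ univ.filter (fun h => G.tar h ∈ S ∧ G.src h ∉ S), c h :=
    Finset.sum_pos' hnonneg ⟨e₀, hmem, he₀⟩
  rw [hcut] at this
  exact lt_irrefl 0 this

/-- From a nonzero real balanced function extract a nonzero integer cycle with smaller support. -/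
lemma exists_int_cycle {c : G.H → ℝ} (hc : G.IsBalanced c) {e₀ : G.H} (he₀ : c e₀ ≠ 0) :
    ∃ d : G.H → ℤ, G.IsBalanced d ∧ (∀ h, d h ≠ 0 → c h ≠ 0) ∧ d ≠ 0 := by
  -- reduce to the positive case
  have main : ∀ e₁ : G.H, 0 < c e₁ →
      ∃ d : G.H → ℤ, G.IsBalanced d ∧ (∀ h, d h ≠ 0 → c h ≠ 0) ∧ d ≠ 0 := by
    intro e₁ he₁
    obtain ⟨g, hanti, hsupp, hpos, hdiv⟩ := flow_of_reach (reach_pos hc he₁)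
    refine ⟨G.unitFlow e₁ + g, ⟨?_, ?_⟩, ?_, ?_⟩
    · intro e; simp only [Pi.add_apply, unitFlow_bar, hanti]; ring
    · intro v
      simp only [Pi.add_apply]
      rw [Finset.sum_add_distrib, div_unitFlow, hdiv]
      by_cases h1 : G.tar e₁ = v <;> by_cases h2 : G.src e₁ = v <;>
        simp [h1, h2, eq_comm]
    · intro h hh
      simp only [Pi.add_apply] at hh
      by_cases h1 : h = e₁
      · subst h1; intro h0; rw [h0] at he₁; exact lt_irrefl 0 he₁
      by_cases h2 : h = G.bar e₁
      · subst h2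
        intro h0
        rw [hc.1 e₁] at h0
        have : c e₁ = 0 := by linarith
        rw [this] at he₁; exact lt_irrefl 0 he₁
      · have hg : g h ≠ 0 := by
          intro h0; apply hh; rw [unitFlow_ne e₁ h h1 h2, h0]; ring
        rcases hsupp h hg with hm | hm
        · exact ne_of_gt hm
        · simp only [Set.mem_setOf_eq] at hm
          rw [hc.1 h] at hm
          intro h0; rw [h0] at hm; norm_num at hm
    · intro h0
      have h1 : G.unitFlow e₁ e₁ + g e₁ = 0 := by
        have := congrFun h0 e₁; simpa using this
      have h2 : 0 ≤ g e₁ := by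
        apply hpos
        simp only [Set.mem_setOf_eq, hc.1 e₁, not_lt]
        linarith
      rw [unitFlow_self] at h1
      omega
  rcases lt_or_gt_of_ne he₀ with h | h
  · refine main (G.bar e₀) ?_
    rw [hc.1 e₀]; linarith
  · exact main e₀ h


open Classical in
/-- Existence of a maximal "spanning tree" containing all short edges. -/
lemma exists_tree (hconn : G.Connected) (lam : G.H → ℝ) (hlam : G.IsLengthFunction lam) :
    ∃ T : Finset G.H, (∀ h ∈ T, G.bar h ∈ T) ∧ (∀ h, lam h < 1/2 → h ∈ T) ∧
      (∀ c : G.H → ℝ, G.IsBalanced c → (∀ h, h ∉ T → c h = 0) → c = 0) ∧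
      (∀ v w : G.V, G.ReachIn (↑T : Set G.H) v w) := by
  set P : Finset G.H → Prop := fun S => (∀ h ∈ S, G.bar h ∈ S) ∧ (∀ h, lam h < 1/2 → h ∈ S) ∧
    (∀ c : G.H → ℝ, G.IsBalanced c → (∀ h, h ∉ S → c h = 0) → c = 0) with hP
  have hacyc_of_short : ∀ S : Finset G.H, (∀ h ∈ S, lam h < 1/2) →
      ∀ c : G.H → ℝ, G.IsBalanced c → (∀ h, h ∉ S → c h = 0) → c = 0 := by
    intro S hS c hcb hsupp
    by_contra hc0
    obtain ⟨e₀, he₀⟩ := Function.ne_iff.1 hc0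
    simp only [Pi.zero_apply] at he₀
    obtain ⟨d, hdb, hdsupp, hd0⟩ := exists_int_cycle hcb he₀
    obtain ⟨e, hde, hlame⟩ := hlam.2.2 d hdb hd0
    have hce : c e ≠ 0 := hdsupp e hde
    have heS : e ∈ S := by
      by_contra heS
      exact hce (hsupp e heS)
    have := hS e heS
    rw [hlame] at this
    exact lt_irrefl _ this
  have hS₀ : P (univ.filter (fun h => lam h < 1/2)) := by
    refine ⟨?_, ?_, ?_⟩
    · intro h hh
      simp only [Finset.mem_filter, Finset.mem_univ, true_and] at hh ⊢
      rwa [hlam.2.1 h]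
    · intro h hh; simp only [Finset.mem_filter, Finset.mem_univ, true_and]; exact hh
    · exact hacyc_of_short _ (fun h hh => by simpa using hh)
  obtain ⟨T, hT𝒮, hmax⟩ := Finset.exists_max_image
    ((univ : Finset (Finset G.H)).filter P) Finset.card
    ⟨univ.filter (fun h => lam h < 1/2), by simpa using hS₀⟩
  simp only [Finset.mem_filter, Finset.mem_univ, true_and] at hT𝒮
  obtain ⟨hbarT, hshortT, hacycT⟩ := hT𝒮
  refine ⟨T, hbarT, hshortT, hacycT, ?_⟩
  have hstep : ∀ x : G.H, G.ReachIn (↑T : Set G.H) (G.src x) (G.tar x) := by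
    intro x
    by_cases hxT : x ∈ T
    · exact reach_single (by simpa using hxT)
    by_contra hnr
    set T' : Finset G.H := insert x (insert (G.bar x) T) with hT'
    have hsub : T ⊆ T' := by
      intro h hh; simp [hT', hh]
    have hxT' : x ∈ T' := by simp [hT']
    have hPT' : P T' := by
      refine ⟨?_, fun h hh => hsub (hshortT h hh), ?_⟩
      · intro h hh
        simp only [hT', Finset.mem_insert] at hh ⊢
        rcases hh with rfl | rfl | hh
        · right; left; rfl
        · left; rw [G.bar_invol]
        · right; right; exact hbarT h hh
      · intro c hcb hsupp
        set S : Set G.V := {v | G.ReachIn (↑T : Set G.H) (G.tar x) v} with hS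
        have hcut := cut_sum c S hcb.1
        simp only [hcb.2, Finset.sum_const_zero] at hcut
        have hsrcS : G.src x ∉ S := by
          intro hmem
          exact hnr (reach_symm (fun h hh => by simpa using hbarT h (by simpa using hh)) hmem)
        have hxcross : x ∈ univ.filter (fun h => G.tar h ∈ S ∧ G.src h ∉ S) := by
          simp only [Finset.mem_filter, Finset.mem_univ, true_and]
          exact ⟨Relation.ReflTransGen.refl, hsrcS⟩
        have hsingle : ∑ h ∈ univ.filter (fun h => G.tar h ∈ S ∧ G.src h ∉ S), c h = c x := by
          refine Finset.sum_eq_single_of_mem x hxcross ?_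
          intro h hh hne
          simp only [Finset.mem_filter, Finset.mem_univ, true_and] at hh
          by_cases hhT : h ∈ T
          · exfalso
            have : G.src h ∈ S := by
              have := reach_closed hh.1 (show G.bar h ∈ (↑T : Set G.H) by simpa using hbarT h hhT)
                (by rw [src_bar])
              rwa [tar_bar] at this
            exact hh.2 this
          · by_cases hhb : h = G.bar x
            · exfalso
              apply hh.2
              have : G.src h = G.tar x := by rw [hhb, src_bar]
              rw [this]
              exact Relation.ReflTransGen.refl
            · apply hsupp
              simp only [hT', Finset.mem_insert]
              push_neg
              exact ⟨hne, hhb, hhT⟩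
        rw [hsingle] at hcut
        -- c x = 0, hence c (bar x) = 0, hence supported in T
        have hbx : c (G.bar x) = 0 := by rw [hcb.1, hcut, neg_zero]
        apply hacycT c hcb
        intro h hh
        by_cases h1 : h = x
        · rwa [h1]
        by_cases h2 : h = G.bar x
        · rwa [h2]
        apply hsupp
        simp only [hT', Finset.mem_insert]
        push_neg
        exact ⟨h1, h2, hh⟩
    have hlt : T.card < T'.card := by
      apply Finset.card_lt_card
      exact Finset.ssubset_iff_of_subset hsub |>.2 ⟨x, hxT', hxT⟩
    have := hmax T' (by simpa using hPT')
    omega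
  intro v w
  have huniv := hconn v w
  induction huniv with
  | refl => exact Relation.ReflTransGen.refl
  | tail _ step ih =>
    obtain ⟨x, _, hsrc, htar⟩ := step
    exact Relation.ReflTransGen.trans ih (by rw [← hsrc, ← htar]; exact hstep x)


variable (G)

/-- The set of vertices reachable from `tar y` in `T` without crossing `y` or `ȳ`. -/
def reachSet (T : Finset G.H) (y : G.H) : Set G.V :=
  {v | G.ReachIn {h | h ∈ T ∧ h ≠ y ∧ h ≠ G.bar y} (G.tar y) v}

variable {G}

lemma reachSet_closed {T : Finset G.H} {y h : G.H} (hh : h ∈ T) (h1 : h ≠ y) (h2 : h ≠ G.bar y)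
    {v : G.V} (hv : v ∈ G.reachSet T y) (hsrc : G.src h = v) : G.tar h ∈ G.reachSet T y :=
  reach_closed hv ⟨hh, h1, h2⟩ hsrc

lemma reachSet_closed' {T : Finset G.H} (hbarT : ∀ h ∈ T, G.bar h ∈ T)
    {y h : G.H} (hh : h ∈ T) (h1 : h ≠ y) (h2 : h ≠ G.bar y)
    (hv : G.tar h ∈ G.reachSet T y) : G.src h ∈ G.reachSet T y := by
  have hb1 : G.bar h ≠ y := by
    intro h0; apply h2; rw [← h0, G.bar_invol]
  have hb2 : G.bar h ≠ G.bar y := by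
    intro h0; apply h1; rw [← G.bar_invol h, h0, G.bar_invol]
  have := reachSet_closed (hbarT h hh) hb1 hb2 hv (src_bar G h)
  rwa [tar_bar] at this

lemma reachSet_trans {T : Finset G.H} {y : G.H} {v w : G.V} (hv : v ∈ G.reachSet T y)
    (hr : G.ReachIn {h | h ∈ T ∧ h ≠ y ∧ h ≠ G.bar y} v w) : w ∈ G.reachSet T y :=
  Relation.ReflTransGen.trans hv hr

open Classical in
/-- The key cut computation: if `Z` is a cycle supported in `T ∪ {f, f̄}` with `Z f = 1` and
`Z y ≥ 1` for a tree edge `y`, then the cut of `T` at `y` separates `src f` from `tar f`,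
with `src f` on the `tar y` side. -/
lemma tree_cut_key {T : Finset G.H} (hbarT : ∀ h ∈ T, G.bar h ∈ T)
    (hacyc : ∀ c : G.H → ℝ, G.IsBalanced c → (∀ h, h ∉ T → c h = 0) → c = 0)
    {Z : G.H → ℤ} (hZb : G.IsBalanced Z)
    {f : G.H} (hfT : f ∉ T) (hZf : Z f = 1)
    (hsupp : ∀ j, j ∉ T → j ≠ f → j ≠ G.bar f → Z j = 0)
    {y : G.H} (hyT : y ∈ T) (hyf : y ≠ f) (hybf : y ≠ G.bar f) (hZy : 1 ≤ Z y) :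
    G.src y ∉ G.reachSet T y ∧ G.src f ∈ G.reachSet T y ∧ G.tar f ∉ G.reachSet T y := by
  set X : Set G.V := G.reachSet T y with hX
  have hF1 : G.src y ∉ X := by
    intro hmem
    exact no_T_cycle_reach hbarT hacyc hyT hmem
  set t : G.H → ℤ := fun h => Z h - G.unitFlow f h with ht
  have htanti : ∀ h, t (G.bar h) = - t h := by
    intro h; simp only [ht, hZb.1 h, unitFlow_bar]; ring
  have hcut := cut_sum t X htanti
  have hdivt : ∀ v ∈ univ.filter (fun v => v ∈ X),
      ∑ e ∈ univ.filter (fun e => G.tar e = v), t e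
        = (if G.src f = v then 1 else 0) - (if G.tar f = v then 1 else 0) := by
    intro v _
    simp only [ht]
    rw [Finset.sum_sub_distrib, hZb.2 v, div_unitFlow]
    ring
  rw [Finset.sum_congr rfl hdivt] at hcut
  have hrhs : ∑ v ∈ univ.filter (fun v => v ∈ X),
      ((if G.src f = v then (1:ℤ) else 0) - (if G.tar f = v then 1 else 0))
      = (if G.src f ∈ X then (1:ℤ) else 0) - (if G.tar f ∈ X then 1 else 0) := by
    rw [Finset.sum_sub_distrib,
      Finset.sum_ite_eq (univ.filter (fun v => v ∈ X)) (G.src f) (fun _ => (1:ℤ)),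
      Finset.sum_ite_eq (univ.filter (fun v => v ∈ X)) (G.tar f) (fun _ => (1:ℤ))]
    simp only [Finset.mem_filter, Finset.mem_univ, true_and]
  rw [hrhs] at hcut
  have hycross : y ∈ univ.filter (fun h => G.tar h ∈ X ∧ G.src h ∉ X) := by
    simp only [Finset.mem_filter, Finset.mem_univ, true_and]
    exact ⟨Relation.ReflTransGen.refl, hF1⟩
  have hsingle : ∑ h ∈ univ.filter (fun h => G.tar h ∈ X ∧ G.src h ∉ X), t h = t y := by
    refine Finset.sum_eq_single_of_mem y hycross ?_
    intro h hh hne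
    simp only [Finset.mem_filter, Finset.mem_univ, true_and] at hh
    by_cases h1 : h = f
    · simp [ht, h1, hZf, unitFlow_self]
    by_cases h2 : h = G.bar f
    · have hZbf : Z (G.bar f) = -1 := by rw [hZb.1, hZf]
      have hu : G.unitFlow f (G.bar f) = -1 := by
        unfold unitFlow
        simp [G.bar_ne f]
      simp [ht, h2, hZbf, hu]
    by_cases h3 : h ∈ T
    · exfalso
      by_cases h4 : h = G.bar y
      · apply hh.2
        rw [h4, src_bar]
        exact Relation.ReflTransGen.refl
      · exact hh.2 (reachSet_closed' hbarT h3 hne h4 hh.1)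
    · simp [ht, hsupp h h3 h1 h2, unitFlow_ne f h h1 h2]
  rw [hsingle] at hcut
  have hty : t y = Z y := by
    simp [ht, unitFlow_ne f y hyf hybf]
  rw [hty] at hcut
  refine ⟨hF1, ?_, ?_⟩
  · by_contra hmem
    simp only [hmem, if_false] at hcut
    split_ifs at hcut <;> omega
  · intro hmem
    simp only [hmem, if_true] at hcut
    split_ifs at hcut <;> omega


/-- The main combinatorial lemma: two half-edges traversed positively by the cycle `Z`
(supported in `T` plus the edge `f`), whose sources are connected avoiding all four
half-edges within `T`, yield a contradiction. -/
lemma sign_lemma {T : Finset G.H} (hbarT : ∀ h ∈ T, G.bar h ∈ T)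
    (hacyc : ∀ c : G.H → ℝ, G.IsBalanced c → (∀ h, h ∉ T → c h = 0) → c = 0)
    {Z : G.H → ℤ} (hZb : G.IsBalanced Z)
    {f : G.H} (hfT : f ∉ T) (hZf : Z f = 1)
    (hsupp : ∀ j, j ∉ T → j ≠ f → j ≠ G.bar f → Z j = 0)
    {e e' : G.H} (hne : e ≠ e') (hZe : 1 ≤ Z e) (hZe' : 1 ≤ Z e')
    {A : Set G.H} (hAT : ∀ h ∈ A, h ∈ T) (hAbar : ∀ h ∈ A, G.bar h ∈ A)
    (hAe : e ∉ A) (hAbe : G.bar e ∉ A) (hAe' : e' ∉ A) (hAbe' : G.bar e' ∉ A)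
    (hreach : G.ReachIn A (G.src e) (G.src e')) : False := by
  have hZbf : Z (G.bar f) = -1 := by rw [hZb.1, hZf]
  have hebf : e ≠ G.bar f := fun h0 => by rw [h0, hZbf] at hZe; omega
  have he'bf : e' ≠ G.bar f := fun h0 => by rw [h0, hZbf] at hZe'; omega
  have hebe' : e ≠ G.bar e' := by
    intro h0
    rw [h0, hZb.1] at hZe
    omega
  have he'be : e' ≠ G.bar e := by
    intro h0; apply hebe'; rw [h0, G.bar_invol]
  -- A is contained in the edge sets avoiding e and avoiding e'
  have hAsube : ∀ h ∈ A, h ∈ {h : G.H | h ∈ T ∧ h ≠ e ∧ h ≠ G.bar e} := by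
    intro h hh
    exact ⟨hAT h hh, fun h0 => hAe (h0 ▸ hh), fun h0 => hAbe (h0 ▸ hh)⟩
  have hAsube' : ∀ h ∈ A, h ∈ {h : G.H | h ∈ T ∧ h ≠ e' ∧ h ≠ G.bar e'} := by
    intro h hh
    exact ⟨hAT h hh, fun h0 => hAe' (h0 ▸ hh), fun h0 => hAbe' (h0 ▸ hh)⟩
  by_cases hef : e = f
  · -- Case B: e is the non-tree edge.
    have he'f : e' ≠ f := fun h0 => hne (hef.trans h0.symm)
    have he'T : e' ∈ T := by
      by_contra he'T
      rw [hsupp e' he'T he'f he'bf] at hZe'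
      omega
    obtain ⟨hF1, hsfX, _⟩ := tree_cut_key hbarT hacyc hZb hfT hZf hsupp he'T he'f he'bf hZe'
    -- src f = src e reaches src e' avoiding e', so src f ∈ reachSet T e' is contradictory
    have husrc : G.src e ∉ G.reachSet T e' := by
      intro hmem
      exact hF1 (reachSet_trans hmem (reach_mono hAsube' hreach))
    rw [← hef] at hsfX
    exact husrc hsfX
  by_cases he'f : e' = f
  · -- symmetric Case B
    have heT : e ∈ T := by
      by_contra heT
      rw [hsupp e heT hef hebf] at hZe
      omega
    obtain ⟨hF1, hsfX, _⟩ := tree_cut_key hbarT hacyc hZb hfT hZf hsupp heT hef hebf hZe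
    have husrc : G.src e' ∉ G.reachSet T e := by
      intro hmem
      exact hF1 (reachSet_trans hmem (reach_mono hAsube
        (reach_symm hAbar hreach)))
    rw [← he'f] at hsfX
    exact husrc hsfX
  -- Case A: both e and e' are tree edges.
  have heT : e ∈ T := by
    by_contra heT; rw [hsupp e heT hef hebf] at hZe; omega
  have he'T : e' ∈ T := by
    by_contra he'T; rw [hsupp e' he'T he'f he'bf] at hZe'; omega
  obtain ⟨hXsrc, hXsf, hXtf⟩ := tree_cut_key hbarT hacyc hZb hfT hZf hsupp heT hef hebf hZe
  obtain ⟨hYsrc, hYsf, hYtf⟩ := tree_cut_key hbarT hacyc hZb hfT hZf hsupp he'T he'f he'bf hZe'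
  set X : Set G.V := G.reachSet T e with hX
  set Y : Set G.V := G.reachSet T e' with hY
  -- src e' ∉ X and tar e' ∉ X
  have hu'X : G.src e' ∉ X := by
    intro hmem
    exact hXsrc (reachSet_trans hmem (reach_mono hAsube (reach_symm hAbar hreach)))
  have hte'X : G.tar e' ∉ X := by
    intro hmem
    exact hu'X (reachSet_closed' hbarT he'T (Ne.symm hne) he'be hmem)
  -- u ∉ Y and tar e ∉ Y
  have huY : G.src e ∉ Y := by
    intro hmem
    exact hYsrc (reachSet_trans hmem (reach_mono hAsube' hreach))
  have hteY : G.tar e ∉ Y := by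
    intro hmem
    exact huY (reachSet_closed' hbarT heT hne hebe' hmem)
  -- transfer: reachability in X avoiding e stays in Y
  have htrans : ∀ v w : G.V, G.ReachIn {h : G.H | h ∈ T ∧ h ≠ e ∧ h ≠ G.bar e} v w →
      v ∈ X → v ∈ Y → w ∈ Y := by
    intro v w hr
    induction hr using Relation.ReflTransGen.head_induction_on with
    | refl => intro _ hv; exact hv
    | head step _ ih =>
      obtain ⟨h, hhA, hsrc, htar⟩ := step
      intro hv hvY
      have hhe' : h ≠ e' := by
        intro h0; rw [h0] at hsrc; rw [← hsrc] at hv; exact hu'X hv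
      have hhbe' : h ≠ G.bar e' := by
        intro h0
        rw [h0, src_bar] at hsrc
        rw [← hsrc] at hv
        exact hte'X hv
      have hbY : G.tar h ∈ Y := reachSet_closed hhA.1 hhe' hhbe' hvY hsrc
      have hbX : G.tar h ∈ X := reachSet_closed hhA.1 hhA.2.1 hhA.2.2 hv hsrc
      exact ih (htar ▸ hbX) (htar ▸ hbY)
  -- src f ∈ X ∩ Y, and tar e ∈ X; transfer the path from src f to tar e into Y
  have hreach_sf_te : G.ReachIn {h : G.H | h ∈ T ∧ h ≠ e ∧ h ≠ G.bar e} (G.src f) (G.tar e) := by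
    have hbar : ∀ h ∈ {h : G.H | h ∈ T ∧ h ≠ e ∧ h ≠ G.bar e},
        G.bar h ∈ {h : G.H | h ∈ T ∧ h ≠ e ∧ h ≠ G.bar e} := by
      intro h hh
      refine ⟨hbarT h hh.1, ?_, ?_⟩
      · intro h0; apply hh.2.2; rw [← h0, G.bar_invol]
      · intro h0; apply hh.2.1; rw [← G.bar_invol h, h0, G.bar_invol]
    exact reach_symm hbar hXsf
  have : G.tar e ∈ Y := htrans _ _ hreach_sf_te hXsf hYsf
  exact hteY this


open Classical in
/-- Fundamental cycles exist for non-tree edges. -/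
lemma exists_fund_cycle {T : Finset G.H} (hbarT : ∀ h ∈ T, G.bar h ∈ T)
    (hTconn : ∀ v w : G.V, G.ReachIn (↑T : Set G.H) v w) (k : G.H) :
    ∃ zk : G.H → ℤ, k ∉ T → (G.IsBalanced zk ∧ zk k = 1 ∧
      ∀ j, j ∉ T → j ≠ k → j ≠ G.bar k → zk j = 0) := by
  by_cases hkT : k ∈ T
  · exact ⟨0, fun h => absurd hkT h⟩
  obtain ⟨g, hanti, hsupp, -, hdiv⟩ := flow_of_reach (hTconn (G.tar k) (G.src k))
  have hgT : ∀ x, g x ≠ 0 → x ∈ T := by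
    intro x hx
    rcases hsupp x hx with h | h
    · simpa using h
    · have := hbarT _ (by simpa using h)
      rwa [G.bar_invol] at this
  refine ⟨G.unitFlow k + g, fun _ => ⟨⟨?_, ?_⟩, ?_, ?_⟩⟩
  · intro x; simp only [Pi.add_apply, unitFlow_bar, hanti]; ring
  · intro v
    simp only [Pi.add_apply]
    rw [Finset.sum_add_distrib, div_unitFlow, hdiv]
    by_cases h1 : G.tar k = v <;> by_cases h2 : G.src k = v <;> simp [h1, h2, eq_comm]
  · have hgk : g k = 0 := by
      by_contra hgk; exact hkT (hgT k hgk)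
    simp [unitFlow_self, hgk]
  · intro j hjT hjk hjbk
    have hgj : g j = 0 := by
      by_contra hgj; exact hjT (hgT j hgj)
    simp [unitFlow_ne k j hjk hjbk, hgj]

end FinGraph


open FinGraph

/-- there is a scalar product on `H₁(Γ,ℝ)` (a symmetric positive
semidefinite bilinear form on the ambient space, positive definite on the span of
the cycles) such that `⟨ω(e), ω(e')⟩ ≤ 0` for distinct half-edges `e, e'` which
either have the same source or whose sources are joined by a path disjoint from
`e, e'` all of whose edges have less than maximal length. -/
theorem exists_good_scalar_product (G : FinGraph) (hconn : G.Connected)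
    (hnosep : ∀ e : G.H, ¬ G.IsSeparating e)
    (lam : G.H → ℝ) (hlam : G.IsLengthFunction lam)
    (ω : G.H → (G.H → ℝ)) (hω : ω ∈ G.Omega (G.H → ℝ))
    (hcanon : ∀ c ∈ G.cycles,
      ∑ e : G.H, ((c e : ℝ) * lam e) • ω e = (fun h => (c h : ℝ))) :
    ∃ B : (G.H → ℝ) →ₗ[ℝ] (G.H → ℝ) →ₗ[ℝ] ℝ,
      (∀ x y, B x y = B y x) ∧
      (∀ x, 0 ≤ B x x) ∧
      (∀ x ∈ Submodule.span ℝ {x : G.H → ℝ | ∃ c ∈ G.cycles, x = fun h => (c h : ℝ)},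
        x ≠ 0 → 0 < B x x) ∧
      (∀ e e' : G.H, e ≠ e' →
        (G.src e = G.src e' ∨
          G.ReachIn {h | h ∉ ({e, G.bar e, e', G.bar e'} : Set G.H) ∧ lam h < 1/2}
            (G.src e) (G.src e')) →
        B (ω e) (ω e') ≤ 0) := by
  classical
  have hωb : G.IsBalanced ω := hω
  obtain ⟨T, hbarT, hshortT, hacyc, hTconn⟩ := exists_tree hconn lam hlam
  -- a linear order on half-edges to pick one half-edge per non-tree edge
  set enc : G.H → ℕ := fun h => ((Fintype.equivFin G.H) h : ℕ) with henc
  have hencinj : ∀ h h' : G.H, enc h = enc h' → h = h' := by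
    intro h h' hh
    have := (Fintype.equivFin G.H).injective (Fin.ext hh)
    exact this
  set O : Finset G.H := (univ \ T).filter (fun h => enc h < enc (G.bar h)) with hO
  have hOT : ∀ k ∈ O, k ∉ T := by
    intro k hk
    simp only [hO, Finset.mem_filter, Finset.mem_sdiff, Finset.mem_univ, true_and] at hk
    exact hk.1
  have hObar : ∀ k ∈ O, G.bar k ∉ O := by
    intro k hk hbk
    simp only [hO, Finset.mem_filter, Finset.mem_sdiff, Finset.mem_univ, true_and] at hk hbk
    rw [G.bar_invol] at hbk
    have h1 := hk.2
    have h2 := hbk.2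
    omega
  have hObarT : ∀ k ∈ O, G.bar k ∉ T := by
    intro k hk hbk
    have := hbarT _ hbk
    rw [G.bar_invol] at this
    exact hOT k hk this
  have hcover : ∀ h, h ∉ T → (h ∈ O ∨ G.bar h ∈ O) := by
    intro h hh
    have hbT : G.bar h ∉ T := by
      intro hbT
      have := hbarT _ hbT
      rw [G.bar_invol] at this
      exact hh this
    have hne : enc h ≠ enc (G.bar h) := by
      intro h0
      exact G.bar_ne h (hencinj _ _ h0.symm)
    rcases lt_or_gt_of_ne hne with h0 | h0
    · left
      simp only [hO, Finset.mem_filter, Finset.mem_sdiff, Finset.mem_univ, true_and]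
      exact ⟨hh, h0⟩
    · right
      simp only [hO, Finset.mem_filter, Finset.mem_sdiff, Finset.mem_univ, true_and]
      rw [G.bar_invol]
      exact ⟨hbT, h0⟩
  -- fundamental cycles
  choose z hz using fun k => exists_fund_cycle hbarT hTconn k
  have hzbal : ∀ k ∈ O, G.IsBalanced (z k) := fun k hk => (hz k (hOT k hk)).1
  have hzself : ∀ k ∈ O, z k k = 1 := fun k hk => (hz k (hOT k hk)).2.1
  have hzsupp : ∀ k ∈ O, ∀ j, j ∉ T → j ≠ k → j ≠ G.bar k → z k j = 0 :=
    fun k hk => (hz k (hOT k hk)).2.2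
  have hzj : ∀ k ∈ O, ∀ j ∈ O, z k j = if k = j then 1 else 0 := by
    intro k hk j hj
    by_cases hkj : k = j
    · subst hkj; simp [hzself k hk]
    · rw [if_neg hkj]
      refine hzsupp k hk j (hOT j hj) (fun h0 => hkj h0.symm) ?_
      intro h0
      exact hObar k hk (h0 ▸ hj)
  -- the decomposition of ω in terms of the fundamental cycles
  have hωid : ∀ x : G.H, ω x = ∑ k ∈ O, (z k x : ℝ) • ω k := by
    set d : G.H → (G.H → ℝ) := fun x => ω x - ∑ k ∈ O, (z k x : ℝ) • ω k with hd
    have hdapp : ∀ x h₀, d x h₀ = ω x h₀ - ∑ k ∈ O, (z k x : ℝ) * ω k h₀ := by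
      intro x h₀
      simp [hd, Finset.sum_apply]
    have hωbar : ∀ x h₀, ω (G.bar x) h₀ = - ω x h₀ := by
      intro x h₀; rw [hωb.1 x]; rfl
    have hdsupp : ∀ x, x ∉ T → d x = 0 := by
      intro x hx
      rcases hcover x hx with hxO | hxO
      · have hsum : ∑ k ∈ O, (z k x : ℝ) • ω k = ω x := by
          have hterm : ∀ k ∈ O, (z k x : ℝ) • ω k = if k = x then ω x else 0 := by
            intro k hk
            rw [hzj k hk x hxO]
            by_cases hkx : k = x
            · subst hkx; simp
            · simp [hkx]
          rw [Finset.sum_congr rfl hterm, Finset.sum_ite_eq' O x (fun _ => ω x), if_pos hxO]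
        simp [hd, hsum]
      · have hsum : ∑ k ∈ O, (z k x : ℝ) • ω k = - ω (G.bar x) := by
          have hterm : ∀ k ∈ O, (z k x : ℝ) • ω k
              = if k = G.bar x then - ω (G.bar x) else 0 := by
            intro k hk
            have hzx : z k x = - z k (G.bar x) := by
              have := (hzbal k hk).1 x
              omega
            rw [hzx, hzj k hk (G.bar x) hxO]
            by_cases hkx : k = G.bar x
            · subst hkx; simp
            · simp [hkx]
          rw [Finset.sum_congr rfl hterm,
            Finset.sum_ite_eq' O (G.bar x) (fun _ => - ω (G.bar x)), if_pos hxO]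
        have hωx : ω x = - ω (G.bar x) := by
          have := hωbar (G.bar x)
          rw [G.bar_invol] at this
          funext h₀
          rw [← G.bar_invol x, hωbar (G.bar x) h₀, G.bar_invol]
          rfl
        rw [hd]
        simp only [hsum, hωx]
        abel
    have hdzero : ∀ h₀ : G.H, (fun x => d x h₀) = 0 := by
      intro h₀
      apply hacyc
      · constructor
        · intro x
          show d (G.bar x) h₀ = - d x h₀
          rw [hdapp, hdapp, hωbar]
          have hterm : ∀ k ∈ O, (z k (G.bar x) : ℝ) * ω k h₀
              = - ((z k x : ℝ) * ω k h₀) := by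
            intro k hk
            have := (hzbal k hk).1 x
            rw [this]; push_cast; ring
          rw [Finset.sum_congr rfl hterm, Finset.sum_neg_distrib]
          ring
        · intro v
          have h1 : ∑ x ∈ univ.filter (fun x => G.tar x = v), ω x h₀ = 0 := by
            have := hωb.2 v
            calc ∑ x ∈ univ.filter (fun x => G.tar x = v), ω x h₀
                = (∑ x ∈ univ.filter (fun x => G.tar x = v), ω x) h₀ :=
                  (Finset.sum_apply _ _ _).symm
              _ = 0 := by rw [this]; rfl
          have h2 : ∀ k ∈ O, ∑ x ∈ univ.filter (fun x => G.tar x = v), (z k x : ℝ) * ω k h₀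
              = 0 := by
            intro k hk
            rw [← Finset.sum_mul]
            have : ∑ x ∈ univ.filter (fun x => G.tar x = v), (z k x : ℝ) = 0 := by
              have h3 := (hzbal k hk).2 v
              have h4 : ((∑ x ∈ univ.filter (fun x => G.tar x = v), z k x : ℤ) : ℝ) = 0 := by
                rw [h3]; simp
              rw [← h4]; push_cast; rfl
            rw [this, zero_mul]
          show ∑ x ∈ univ.filter (fun x => G.tar x = v), d x h₀ = 0
          calc ∑ x ∈ univ.filter (fun x => G.tar x = v), d x h₀
              = ∑ x ∈ univ.filter (fun x => G.tar x = v),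
                  (ω x h₀ - ∑ k ∈ O, (z k x : ℝ) * ω k h₀) := by
                refine Finset.sum_congr rfl fun x _ => hdapp x h₀
            _ = (∑ x ∈ univ.filter (fun x => G.tar x = v), ω x h₀)
                - ∑ x ∈ univ.filter (fun x => G.tar x = v), ∑ k ∈ O, (z k x : ℝ) * ω k h₀ :=
                Finset.sum_sub_distrib _ _
            _ = 0 := by
                rw [h1, Finset.sum_comm, Finset.sum_congr rfl h2]
                simp
      · intro x hx
        rw [hdsupp x hx]
        rfl
    intro x
    have hx : d x = 0 := by
      funext h₀
      exact congrFun (hdzero h₀) x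
    rw [hd] at hx
    exact sub_eq_zero.1 hx
  -- the linear algebra
  set Cset : Set (G.H → ℝ) := {x : G.H → ℝ | ∃ c ∈ G.cycles, x = fun h => (c h : ℝ)} with hCset
  set Cspan : Submodule ℝ (G.H → ℝ) := Submodule.span ℝ Cset with hCspan
  set v : {k // k ∈ O} → (G.H → ℝ) := fun k => ω k.val with hv
  set Wspan : Submodule ℝ (G.H → ℝ) := Submodule.span ℝ (Set.range v) with hWspan
  have hωW : ∀ x : G.H, ω x ∈ Wspan := by
    intro x
    rw [hωid x]
    refine Submodule.sum_mem _ fun k hk => Submodule.smul_mem _ _ ?_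
    exact Submodule.subset_span ⟨⟨k, hk⟩, rfl⟩
  have hCW : Cspan ≤ Wspan := by
    rw [hCspan]
    refine Submodule.span_le.2 ?_
    rintro x ⟨c, hc, rfl⟩
    rw [← hcanon c hc]
    exact Submodule.sum_mem _ fun e _ => Submodule.smul_mem _ _ (hωW e)
  have hzmem : ∀ k : {k // k ∈ O}, (fun h => ((z k.val h : ℤ) : ℝ)) ∈ Cspan := by
    intro k
    refine Submodule.subset_span ⟨z k.val, ?_, rfl⟩
    exact hzbal k.val k.property
  have hzind : LinearIndependent ℝ (fun k : {k // k ∈ O} => (fun h => ((z k.val h : ℤ) : ℝ))) := by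
    rw [linearIndependent_iff']
    intro s g hsum i hi
    have := congrFun hsum i.val
    rw [Finset.sum_apply] at this
    simp only [Pi.smul_apply, smul_eq_mul, Pi.zero_apply] at this
    have hterm : ∀ k ∈ s, g k * ((z k.val i.val : ℤ) : ℝ) = if k = i then g k else 0 := by
      intro k _
      rw [hzj k.val k.property i.val i.property]
      by_cases hki : k = i
      · subst hki; simp
      · have : k.val ≠ i.val := fun h0 => hki (Subtype.ext h0)
        simp [this, hki]
    rw [Finset.sum_congr rfl hterm, Finset.sum_ite_eq' s i (fun k => g k), if_pos hi] at this
    exact this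
  have hfrW : Module.finrank ℝ Wspan ≤ O.card := by
    have := finrank_range_le_card (R := ℝ) v
    rw [Fintype.card_coe] at this
    exact this
  have hfrC : O.card ≤ Module.finrank ℝ Cspan := by
    have hind2 : LinearIndependent ℝ (fun k : {k // k ∈ O} =>
        (⟨(fun h => ((z k.val h : ℤ) : ℝ)), hzmem k⟩ : Cspan)) := by
      apply LinearIndependent.of_comp Cspan.subtype
      exact hzind
    have := hind2.fintype_card_le_finrank
    rw [Fintype.card_coe] at this
    exact this
  have hCeqW : Cspan = Wspan :=
    Submodule.eq_of_le_of_finrank_le hCW (le_trans hfrW hfrC)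
  have hvind : LinearIndependent ℝ v := by
    rw [linearIndependent_iff_card_eq_finrank_span]
    rw [Fintype.card_coe]
    have h1 : Module.finrank ℝ Wspan = O.card := by
      have := hCeqW ▸ hfrC
      omega
    exact h1.symm
  set bas : Module.Basis {k // k ∈ O} ℝ (Submodule.span ℝ (Set.range v)) := Module.Basis.span hvind with hbas
  have hL : ∀ k : {k // k ∈ O}, ∃ Lk : (G.H → ℝ) →ₗ[ℝ] ℝ,
      Lk.comp (Submodule.span ℝ (Set.range v)).subtype = bas.coord k :=
    fun k => LinearMap.exists_extend (bas.coord k)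
  choose L hLspec using hL
  have hLval : ∀ k : {k // k ∈ O}, ∀ x : G.H → ℝ, ∀ hx : x ∈ Submodule.span ℝ (Set.range v),
      L k x = bas.coord k ⟨x, hx⟩ := by
    intro k x hx
    have := congrFun (congrArg DFunLike.coe (hLspec k)) ⟨x, hx⟩
    simpa using this
  have hLω : ∀ k j : {k // k ∈ O}, L k (ω j.val) = if j = k then 1 else 0 := by
    intro k j
    have hmem : ω j.val ∈ Submodule.span ℝ (Set.range v) := hωW j.val
    rw [hLval k _ hmem]
    have hel : (⟨ω j.val, hmem⟩ : Submodule.span ℝ (Set.range v)) = bas j := by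
      apply Subtype.ext
      rw [hbas, Module.Basis.span_apply]
    rw [hel, Module.Basis.coord_apply, Module.Basis.repr_self, Finsupp.single_apply]
  have hLe : ∀ k : {k // k ∈ O}, ∀ x : G.H, L k (ω x) = ((z k.val x : ℤ) : ℝ) := by
    intro k x
    rw [hωid x, map_sum]
    have hterm : ∀ j ∈ O, L k ((z j x : ℝ) • ω j)
        = if j = k.val then ((z j x : ℤ) : ℝ) else 0 := by
      intro j hj
      rw [map_smul, smul_eq_mul]
      have := hLω k ⟨j, hj⟩
      rw [this]
      by_cases hjk : j = k.val
      · have h5 : (⟨j, hj⟩ : {k // k ∈ O}) = k := Subtype.ext hjk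
        simp [h5, hjk]
      · have h5 : (⟨j, hj⟩ : {k // k ∈ O}) ≠ k := fun h0 => hjk (congrArg Subtype.val h0)
        simp [h5, hjk]
    rw [Finset.sum_congr rfl hterm,
      Finset.sum_ite_eq' O k.val (fun j => ((z j x : ℤ) : ℝ)), if_pos k.property]
  -- the bilinear form
  set B : (G.H → ℝ) →ₗ[ℝ] (G.H → ℝ) →ₗ[ℝ] ℝ :=
    ∑ k : {k // k ∈ O}, (L k).smulRight (L k) with hB
  have hBapp : ∀ x y : G.H → ℝ, B x y = ∑ k : {k // k ∈ O}, L k x * L k y := by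
    intro x y
    rw [hB]
    rw [LinearMap.sum_apply]
    rw [LinearMap.coe_sum, Finset.sum_apply]
    refine Finset.sum_congr rfl fun k _ => ?_
    rw [LinearMap.smulRight_apply, LinearMap.smul_apply, smul_eq_mul, mul_comm]
  refine ⟨B, ?_, ?_, ?_, ?_⟩
  · intro x y
    rw [hBapp, hBapp]
    exact Finset.sum_congr rfl fun k _ => mul_comm _ _
  · intro x
    rw [hBapp]
    exact Finset.sum_nonneg fun k _ => mul_self_nonneg _
  · intro x hx hx0
    have hxW : x ∈ Submodule.span ℝ (Set.range v) := by
      have : x ∈ Cspan := hx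
      rw [hCeqW] at this
      exact this
    have hex : ∃ k : {k // k ∈ O}, L k x ≠ 0 := by
      by_contra hall
      push_neg at hall
      have hrepr : bas.repr ⟨x, hxW⟩ = 0 := by
        ext k
        have := hLval k x hxW
        rw [Module.Basis.coord_apply] at this
        rw [← this, hall k]
        rfl
      have : (⟨x, hxW⟩ : Submodule.span ℝ (Set.range v)) = 0 := by
        have := bas.repr.map_eq_zero_iff.1 hrepr
        exact this
      apply hx0
      have := congrArg Subtype.val this
      simpa using this
    obtain ⟨k, hk⟩ := hex
    rw [hBapp]
    refine Finset.sum_pos' (fun j _ => mul_self_nonneg _) ⟨k, Finset.mem_univ k, ?_⟩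
    exact mul_self_pos.2 hk
  · intro e e' hne hyp
    set A : Set G.H := {h | h ∉ ({e, G.bar e, e', G.bar e'} : Set G.H) ∧ lam h < 1/2} with hA
    have hre : G.ReachIn A (G.src e) (G.src e') := by
      rcases hyp with h | h
      · rw [h]; exact Relation.ReflTransGen.refl
      · exact h
    have hAT : ∀ h ∈ A, h ∈ T := fun h hh => hshortT h hh.2
    have hAbar : ∀ h ∈ A, G.bar h ∈ A := by
      intro h hh
      constructor
      · intro hmem
        apply hh.1
        simp only [Set.mem_insert_iff, Set.mem_singleton_iff] at hmem ⊢
        rcases hmem with h0 | h0 | h0 | h0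
        · right; left; rw [← G.bar_invol h, h0]
        · left; rw [← G.bar_invol h, h0, G.bar_invol]
        · right; right; right; rw [← G.bar_invol h, h0]
        · right; right; left; rw [← G.bar_invol h, h0, G.bar_invol]
      · rw [hlam.2.1 h]; exact hh.2
    have hAe : e ∉ A := fun hh => hh.1 (by simp)
    have hAbe : G.bar e ∉ A := fun hh => hh.1 (by simp)
    have hAe' : e' ∉ A := fun hh => hh.1 (by simp)
    have hAbe' : G.bar e' ∉ A := fun hh => hh.1 (by simp)
    rw [hBapp]
    refine Finset.sum_nonpos fun k _ => ?_
    rw [hLe, hLe]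
    have hint : z k.val e * z k.val e' ≤ 0 := by
      by_contra hpos
      push_neg at hpos
      have hkT : k.val ∉ T := hOT k.val k.property
      have hkbT : G.bar k.val ∉ T := hObarT k.val k.property
      rcases mul_pos_iff.1 hpos with ⟨h1, h2⟩ | ⟨h1, h2⟩
      · exact sign_lemma hbarT hacyc (hzbal k.val k.property) hkT
          (hzself k.val k.property) (hzsupp k.val k.property) hne h1 h2
          hAT hAbar hAe hAbe hAe' hAbe' hre
      · have hZbal : G.IsBalanced (-(z k.val)) := balanced_neg (hzbal k.val k.property)
        have hZf : (-(z k.val)) (G.bar k.val) = 1 := by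
          have := (hzbal k.val k.property).1 k.val
          have h3 := hzself k.val k.property
          simp only [Pi.neg_apply]
          omega
        have hZsupp : ∀ j, j ∉ T → j ≠ G.bar k.val → j ≠ G.bar (G.bar k.val) →
            (-(z k.val)) j = 0 := by
          intro j hj h3 h4
          rw [G.bar_invol] at h4
          simp only [Pi.neg_apply]
          rw [hzsupp k.val k.property j hj h4 h3]
          ring
        refine sign_lemma hbarT hacyc hZbal hkbT hZf hZsupp hne ?_ ?_
          hAT hAbar hAe hAbe hAe' hAbe' hre
        · simp only [Pi.neg_apply]; omega
        · simp only [Pi.neg_apply]; omega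
    have : ((z k.val e * z k.val e' : ℤ) : ℝ) ≤ 0 := by exact_mod_cast hint
    push_cast at this
    linarith
end
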